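/- arXiv:2001.06771 — 5 statements merged into one kernel-verified Lean document; each statement's English description precedes it below -/
import Mathlib

section
/- Let L : U → ℝ be smooth and suppose that Γ is the Euler–Lagrange field of L, i.e. Γ(∂L/∂u^a) = ∂L/∂x^a holds at every point of U for every a = 1,…,n. Then the velocity Hessian g_{ab} := ∂²L/∂u^a∂u^b satisfies the four Helmholtz conditions on U: g_{ab} = g_{ba}; Γ(g_{ab}) = g_{ac}Γ^c_b + g_{bc}Γ^c_a; g_{ac}Φ^c_b = g_{bc}Φ^c_a; and ∂g_{ab}/∂u^c = ∂g_{ac}/∂u^b, for all a,b,c. -/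
/- Setting: the evolution space E = ℝ × ℝ^n × ℝ^n with coordinates (t, x^a, u^a),
   a SODE ẍ^a = F^a(t,x,ẋ), and all the associated geometric objects. -/

noncomputable section

namespace IP

/-- The evolution space ℝ^{1+2n} with coordinates (t, x, u). -/
abbrev E (n : ℕ) : Type := ℝ × (Fin n → ℝ) × (Fin n → ℝ)

variable {n : ℕ}

/-- the coordinate vector ∂/∂t -/
def et (n : ℕ) : E n := (1, 0, 0)

/-- the coordinate vector ∂/∂x^a -/
def ex (a : Fin n) : E n := (0, Pi.single a 1, 0)

/-- the coordinate vector ∂/∂u^a -/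
def eu (a : Fin n) : E n := (0, 0, Pi.single a 1)

/-- the SODE vector field Γ = ∂/∂t + u^a ∂/∂x^a + F^a ∂/∂u^a (its value at p) -/
def GamV (F : Fin n → E n → ℝ) (p : E n) : E n := (1, p.2.2, fun a => F a p)

/-- Γ acting on functions as a first-order differential operator -/
def Gam (F : Fin n → E n → ℝ) (f : E n → ℝ) (p : E n) : ℝ := fderiv ℝ f p (GamV F p)

/-- the nonlinear connection coefficients Γ^a_b = -(1/2) ∂F^a/∂u^b -/
def Gc (F : Fin n → E n → ℝ) (a b : Fin n) (p : E n) : ℝ :=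
  -(1 / 2) * fderiv ℝ (F a) p (eu b)

/-- the Jacobi endomorphism Φ^a_b = -∂F^a/∂x^b - Γ^c_b Γ^a_c - Γ(Γ^a_b) -/
def Phi (F : Fin n → E n → ℝ) (a b : Fin n) (p : E n) : ℝ :=
  -(fderiv ℝ (F a) p (ex b)) - (∑ c, Gc F c b p * Gc F a c p) - Gam F (Gc F a b) p

/-- the contact 1-form θ^a = dx^a - u^a dt -/
def theta (a : Fin n) (p v : E n) : ℝ := v.2.1 a - p.2.2 a * v.1

/-- the 1-form ψ^a = du^a - F^a dt + Γ^a_b θ^b -/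
def psi (F : Fin n → E n → ℝ) (a : Fin n) (p v : E n) : ℝ :=
  v.2.2 a - F a p * v.1 + ∑ b, Gc F a b p * theta b p v

/-- the vertical vector field V_a = ∂/∂u^a -/
def Vv (a : Fin n) : E n := eu a

/-- the horizontal vector field H_a = ∂/∂x^a - Γ^b_a ∂/∂u^b (its value at p) -/
def Hv (F : Fin n → E n → ℝ) (a : Fin n) (p : E n) : E n :=
  (0, Pi.single a 1, fun b => -(Gc F b a p))

/-- exterior derivative of a 1-form, evaluated on (constant extensions of) vectors -/
def d1 (ω : E n → E n → ℝ) (p v w : E n) : ℝ :=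
  fderiv ℝ (fun q => ω q w) p v - fderiv ℝ (fun q => ω q v) p w

/-- exterior derivative of a 2-form, evaluated on (constant extensions of) vectors -/
def d2 (Ω : E n → E n → E n → ℝ) (p v1 v2 v3 : E n) : ℝ :=
  fderiv ℝ (fun q => Ω q v2 v3) p v1 - fderiv ℝ (fun q => Ω q v1 v3) p v2 +
    fderiv ℝ (fun q => Ω q v1 v2) p v3

/-- Lie bracket of vector fields on E -/
def lie (X Y : E n → E n) (p : E n) : E n := fderiv ℝ Y p (X p) - fderiv ℝ X p (Y p)

/-- the four Helmholtz conditions for a multiplier matrix g on U -/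
def Helmholtz (F : Fin n → E n → ℝ) (U : Set (E n)) (g : Fin n → Fin n → E n → ℝ) : Prop :=
  (∀ p ∈ U, ∀ a b, g a b p = g b a p) ∧
  (∀ p ∈ U, ∀ a b, Gam F (g a b) p =
      (∑ c, g a c p * Gc F c b p) + ∑ c, g b c p * Gc F c a p) ∧
  (∀ p ∈ U, ∀ a b, (∑ c, g a c p * Phi F c b p) = ∑ c, g b c p * Phi F c a p) ∧
  (∀ p ∈ U, ∀ a b c, fderiv ℝ (g a b) p (eu c) = fderiv ℝ (g a c) p (eu b))

/-- the curvature components R^d_{ef} -/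
def Rcoord (F : Fin n → E n → ℝ) (d e f : Fin n) (p : E n) : ℝ :=
  (1 / 2) * (fderiv ℝ (fun q => fderiv ℝ (F d) q (eu f)) p (ex e)
    - fderiv ℝ (fun q => fderiv ℝ (F d) q (eu e)) p (ex f)
    + (1 / 2) * ((∑ c, fderiv ℝ (F c) p (eu e) *
            fderiv ℝ (fun q => fderiv ℝ (F d) q (eu f)) p (eu c))
        - ∑ c, fderiv ℝ (F c) p (eu f) *
            fderiv ℝ (fun q => fderiv ℝ (F d) q (eu e)) p (eu c)))

/-- wedge product of two 1-forms -/
def w11 (α β : E n → E n → ℝ) (p v w : E n) : ℝ := α p v * β p w - α p w * β p v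

/-- wedge product of a 1-form with a 2-form -/
def w12 (α : E n → E n → ℝ) (Ω : E n → E n → E n → ℝ) (p v1 v2 v3 : E n) : ℝ :=
  α p v1 * Ω p v2 v3 - α p v2 * Ω p v1 v3 + α p v3 * Ω p v1 v2

/-- a smooth 1-form on U -/
def Smooth1 (U : Set (E n)) (α : E n → E n → ℝ) : Prop :=
  (∀ v, ContDiffOn ℝ (⊤ : ℕ∞) (fun q => α q v) U) ∧ ∀ p ∈ U, IsLinearMap ℝ (α p)

/-- the 2-form Ω = g_{ab} ψ^a ∧ θ^b -/
def OmegaG (F : Fin n → E n → ℝ) (g : Fin n → Fin n → E n → ℝ) :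
    E n → E n → E n → ℝ :=
  fun q v w => ∑ a, ∑ b, g a b q * w11 (psi F a) (theta b) q v w

end IP
/- Eigenstructure of Φ: distinct smooth eigenvalues, eigenvector fields X_a forming
   a basis at every point, dual coframe φ^a, the lifted eigenforms φ^{aV}, φ^{aH},
   the 2-forms ω^{ab}, ω^a, the structure functions τ and the curvature functions R. -/

namespace IP

variable {n : ℕ}

/-- the vertical eigenform φ^{aV} = φ^a_c ψ^c -/
def phiV (F : Fin n → E n → ℝ) (phc : Fin n → Fin n → E n → ℝ) (a : Fin n)
    (p v : E n) : ℝ :=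
  ∑ c, phc a c p * psi F c p v

/-- the horizontal eigenform φ^{aH} = φ^a_c θ^c -/
def phiH (phc : Fin n → Fin n → E n → ℝ) (a : Fin n) (p v : E n) : ℝ :=
  ∑ c, phc a c p * theta c p v

/-- the vertical eigenvector field X_a^V = X^c_a V_c -/
def XVf (X : Fin n → Fin n → E n → ℝ) (a : Fin n) (p : E n) : E n :=
  (0, 0, fun c => X a c p)

/-- the horizontal eigenvector field X_a^H = X^c_a H_c -/
def XHf (F : Fin n → E n → ℝ) (X : Fin n → Fin n → E n → ℝ) (a : Fin n) (p : E n) : E n :=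
  (0, fun c => X a c p, fun b => -∑ c, X a c p * Gc F b c p)

/-- the 2-forms ω^{ab} = (1/2)(φ^{aV} ∧ φ^{bH} + φ^{bV} ∧ φ^{aH}) -/
def omab (F : Fin n → E n → ℝ) (phc : Fin n → Fin n → E n → ℝ) (a b : Fin n)
    (p v w : E n) : ℝ :=
  (1 / 2) * (w11 (phiV F phc a) (phiH phc b) p v w + w11 (phiV F phc b) (phiH phc a) p v w)

/-- the 2-forms ω^a = φ^{aV} ∧ φ^{aH} -/
def oma (F : Fin n → E n → ℝ) (phc : Fin n → Fin n → E n → ℝ) (a : Fin n)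
    (p v w : E n) : ℝ :=
  w11 (phiV F phc a) (phiH phc a) p v w

/-- the structure functions τ^{aΓ}_b = -dφ^{aV}(Γ, X_b^V) -/
def tauG (F : Fin n → E n → ℝ) (X phc : Fin n → Fin n → E n → ℝ) (a b : Fin n)
    (p : E n) : ℝ :=
  -(d1 (phiV F phc a) p (GamV F p) (XVf X b p))

/-- the structure functions τ^{aH}_{bc} = dφ^{aV}(X_c^V, X_b^H) -/
def tauH (F : Fin n → E n → ℝ) (X phc : Fin n → Fin n → E n → ℝ) (a b c : Fin n)
    (p : E n) : ℝ :=
  d1 (phiV F phc a) p (XVf X c p) (XHf F X b p)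

/-- the structure functions τ^{aV}_{bc} = -dφ^{aH}(X_b^V, X_c^H) -/
def tauV (F : Fin n → E n → ℝ) (X phc : Fin n → Fin n → E n → ℝ) (a b c : Fin n)
    (p : E n) : ℝ :=
  -(d1 (phiH phc a) p (XVf X b p) (XHf F X c p))

/-- the curvature functions R^a_{bc} = φ^a_d X^e_b X^f_c R^d_{ef} -/
def Rphi (F : Fin n → E n → ℝ) (X phc : Fin n → Fin n → E n → ℝ) (a b c : Fin n)
    (p : E n) : ℝ :=
  ∑ d, ∑ e, ∑ f, phc a d p * X b e p * X c f p * Rcoord F d e f p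

/-- The standing hypotheses: F smooth, Φ diagonalisable on U with smooth eigenvalues λ_a,
pairwise distinct at every point, smooth eigenvector fields X_a (components X^c_a = `X a c`)
forming a basis of ℝ^n at every point, and dual coframe φ^a (components φ^a_c = `phc a c`). -/
structure EigenData (F : Fin n → E n → ℝ) (U : Set (E n)) (lam : Fin n → E n → ℝ)
    (X phc : Fin n → Fin n → E n → ℝ) : Prop where
  smooth_F : ∀ a, ContDiffOn ℝ (⊤ : ℕ∞) (F a) U
  smooth_lam : ∀ a, ContDiffOn ℝ (⊤ : ℕ∞) (lam a) U
  smooth_X : ∀ a c, ContDiffOn ℝ (⊤ : ℕ∞) (X a c) U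
  smooth_phc : ∀ a c, ContDiffOn ℝ (⊤ : ℕ∞) (phc a c) U
  distinct : ∀ p ∈ U, ∀ a b, a ≠ b → lam a p ≠ lam b p
  eigen : ∀ p ∈ U, ∀ a c, (∑ d, Phi F c d p * X a d p) = lam a p * X a c p
  dual : ∀ p ∈ U, ∀ a b, (∑ c, phc a c p * X b c p) = if a = b then (1 : ℝ) else 0

/-- `dη ∈ ⟨S⟩`: the 3-form η lies in the ideal generated by the 2-forms in S
(with smooth 1-form coefficients), as forms on U -/
def InIdeal (U : Set (E n)) (S : Set (E n → E n → E n → ℝ))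
    (η : E n → E n → E n → E n → ℝ) : Prop :=
  ∃ (m : ℕ) (Ω : Fin m → E n → E n → E n → ℝ) (α : Fin m → E n → E n → ℝ),
    (∀ j, Ω j ∈ S) ∧ (∀ j, Smooth1 U (α j)) ∧
      ∀ p ∈ U, ∀ v1 v2 v3, η p v1 v2 v3 = ∑ j, w12 (α j) (Ω j) p v1 v2 v3

/-- the C^∞(U)-module Σ⁰ spanned by {ω^{ab} : a ≤ b} (as forms on U) -/
def Sigma0 (F : Fin n → E n → ℝ) (phc : Fin n → Fin n → E n → ℝ) (U : Set (E n)) :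
    Set (E n → E n → E n → ℝ) :=
  {ω | ∃ r : Fin n → Fin n → E n → ℝ,
      (∀ a b, ContDiffOn ℝ (⊤ : ℕ∞) (r a b) U) ∧
      ∀ p ∈ U, ∀ v w, ω p v w =
        ∑ a, ∑ b, if a ≤ b then r a b p * omab F phc a b p v w else 0}

/-- the C^∞(U)-module Σ̃¹ spanned by {ω^a} (as forms on U) -/
def SigmaT1 (F : Fin n → E n → ℝ) (phc : Fin n → Fin n → E n → ℝ) (U : Set (E n)) :
    Set (E n → E n → E n → ℝ) :=
  {ω | ∃ r : Fin n → E n → ℝ,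
      (∀ a, ContDiffOn ℝ (⊤ : ℕ∞) (r a) U) ∧
      ∀ p ∈ U, ∀ v w, ω p v w = ∑ a, r a p * oma F phc a p v w}

/-- one step of the differential-ideal recursion: {ω ∈ S : dω ∈ ⟨S⟩} -/
def Next (U : Set (E n)) (S : Set (E n → E n → E n → ℝ)) : Set (E n → E n → E n → ℝ) :=
  {ω | ω ∈ S ∧ InIdeal U S (d2 ω)}

/-- the sequence Σ⁰, Σ¹, Σ², …  (`SigSeq F phc U i` is Σ^i) -/
def SigSeq (F : Fin n → E n → ℝ) (phc : Fin n → Fin n → E n → ℝ) (U : Set (E n)) :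
    ℕ → Set (E n → E n → E n → ℝ)
  | 0 => Sigma0 F phc U
  | k + 1 => Next U (SigSeq F phc U k)

/-- the sequence Σ̃¹, Σ̃², …  (`SigTSeq F phc U i` is Σ̃^{i+1}) -/
def SigTSeq (F : Fin n → E n → ℝ) (phc : Fin n → Fin n → E n → ℝ) (U : Set (E n)) :
    ℕ → Set (E n → E n → E n → ℝ)
  | 0 => SigmaT1 F phc U
  | k + 1 => Next U (SigTSeq F phc U k)

def ia (n : ℕ) (a : Fin n) : Fin (2 * n) := ⟨2 * a.1, by have := a.2; omega⟩

def ib (n : ℕ) (a : Fin n) : Fin (2 * n) := ⟨2 * a.1 + 1, by have := a.2; omega⟩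

/-- the wedge product ω_1 ∧ ω_2 ∧ ⋯ ∧ ω_n of n 2-forms, as a 2n-form -/
def WedgeN (ωs : Fin n → E n → E n → E n → ℝ) (p : E n) (v : Fin (2 * n) → E n) : ℝ :=
  (1 / 2 ^ n) * ∑ σ : Equiv.Perm (Fin (2 * n)),
    ((Equiv.Perm.sign σ : ℤ) : ℝ) * ∏ a, ωs a p (v (σ (ia n a))) (v (σ (ib n a)))

/-- Frobenius integrability of the eigen co-distribution D_a^⊥ = span{φ^{aV}, φ^{aH}} -/
def Integrable1 (F : Fin n → E n → ℝ) (phc : Fin n → Fin n → E n → ℝ) (U : Set (E n))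
    (a : Fin n) : Prop :=
  ∃ α β γ δ : E n → E n → ℝ,
    Smooth1 U α ∧ Smooth1 U β ∧ Smooth1 U γ ∧ Smooth1 U δ ∧
    (∀ p ∈ U, ∀ v w, d1 (phiV F phc a) p v w =
        w11 α (phiV F phc a) p v w + w11 β (phiH phc a) p v w) ∧
    (∀ p ∈ U, ∀ v w, d1 (phiH phc a) p v w =
        w11 γ (phiV F phc a) p v w + w11 δ (phiH phc a) p v w)

end IP

namespace IP
/- ======================= auxiliary lemmas for stmt0 ======================= -/

section Stmt0Aux

variable {n : ℕ} {U : Set (E n)} {F : Fin n → E n → ℝ} {L f₀ g₀ : E n → ℝ} {p : E n}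

private lemma one_le_inf : (1 : WithTop ℕ∞) ≤ ((⊤:ℕ∞) : WithTop ℕ∞) :=
  WithTop.coe_le_coe.2 le_top |>.trans_eq' (by norm_cast)

private lemma two_le_inf : (2 : WithTop ℕ∞) ≤ ((⊤:ℕ∞) : WithTop ℕ∞) :=
  WithTop.coe_le_coe.2 le_top |>.trans_eq' (by norm_cast)

private lemma smooth_dir (hU : IsOpen U) (hf : ContDiffOn ℝ (⊤:ℕ∞) f₀ U) (v : E n) :
    ContDiffOn ℝ (⊤:ℕ∞) (fun q => fderiv ℝ f₀ q v) U :=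
  (((contDiffOn_infty_iff_fderiv_of_isOpen hU).1 hf).2).clm_apply contDiffOn_const

private lemma diffAt {Y : Type*} [NormedAddCommGroup Y] [NormedSpace ℝ Y] {f : E n → Y}
    (hU : IsOpen U) (hf : ContDiffOn ℝ (⊤:ℕ∞) f U) (hp : p ∈ U) :
    DifferentiableAt ℝ f p :=
  (hf.contDiffAt (hU.mem_nhds hp)).differentiableAt (by simp)

private lemma schwarz (hU : IsOpen U) (hf : ContDiffOn ℝ (⊤:ℕ∞) f₀ U) (hp : p ∈ U) (v w : E n) :
    fderiv ℝ (fun q => fderiv ℝ f₀ q v) p w = fderiv ℝ (fun q => fderiv ℝ f₀ q w) p v := by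
  have hsym : IsSymmSndFDerivAt ℝ f₀ p :=
    (hf.contDiffAt (hU.mem_nhds hp)).isSymmSndFDerivAt
      (by simpa [minSmoothness_of_isRCLikeNormedField] using two_le_inf)
  have hd : DifferentiableAt ℝ (fderiv ℝ f₀) p :=
    diffAt hU ((contDiffOn_infty_iff_fderiv_of_isOpen hU).1 hf).2 hp
  have e : ∀ w' : E n, fderiv ℝ (fun q => fderiv ℝ f₀ q w') p =
      (fderiv ℝ (fderiv ℝ f₀) p).flip w' := by
    intro w'
    rw [fderiv_clm_apply hd (differentiableAt_const _)]
    simp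
  rw [e v, e w]
  exact hsym w v

private lemma fderiv_u (c : Fin n) (p v : E n) :
    fderiv ℝ (fun q : E n => q.2.2 c) p v = v.2.2 c := by
  have h : (fun q : E n => q.2.2 c) =
      ⇑((ContinuousLinearMap.proj (R := ℝ) (φ := fun _ : Fin n => ℝ) c).comp
      ((ContinuousLinearMap.snd ℝ (Fin n → ℝ) (Fin n → ℝ)).comp
        (ContinuousLinearMap.snd ℝ ℝ ((Fin n → ℝ) × (Fin n → ℝ))))) := rfl
  rw [h, ContinuousLinearMap.fderiv]
  rfl

private lemma diff_u (c : Fin n) (p : E n) :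
    DifferentiableAt ℝ (fun q : E n => q.2.2 c) p := by
  have h : (fun q : E n => q.2.2 c) =
      ⇑((ContinuousLinearMap.proj (R := ℝ) (φ := fun _ : Fin n => ℝ) c).comp
      ((ContinuousLinearMap.snd ℝ (Fin n → ℝ) (Fin n → ℝ)).comp
        (ContinuousLinearMap.snd ℝ ℝ ((Fin n → ℝ) × (Fin n → ℝ))))) := rfl
  rw [h]
  exact (ContinuousLinearMap.differentiable _).differentiableAt

private lemma gam_congr (hU : IsOpen U) (h : Set.EqOn f₀ g₀ U) (hp : p ∈ U) :
    Gam F f₀ p = Gam F g₀ p := by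
  unfold Gam
  rw [Filter.EventuallyEq.fderiv_eq (h.eventuallyEq_of_mem (hU.mem_nhds hp))]

private lemma fderiv_congr_dir (hU : IsOpen U) (h : Set.EqOn f₀ g₀ U) (hp : p ∈ U) (v : E n) :
    fderiv ℝ f₀ p v = fderiv ℝ g₀ p v := by
  rw [Filter.EventuallyEq.fderiv_eq (h.eventuallyEq_of_mem (hU.mem_nhds hp))]

private lemma gam_sub (hf : DifferentiableAt ℝ f₀ p) (hg : DifferentiableAt ℝ g₀ p) :
    Gam F (fun q => f₀ q - g₀ q) p = Gam F f₀ p - Gam F g₀ p := by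
  unfold Gam; rw [fderiv_fun_sub hf hg]; rfl

private lemma gam_mul (hf : DifferentiableAt ℝ f₀ p) (hg : DifferentiableAt ℝ g₀ p) :
    Gam F (fun q => f₀ q * g₀ q) p = Gam F f₀ p * g₀ p + f₀ p * Gam F g₀ p := by
  unfold Gam; rw [fderiv_fun_mul hf hg]; simp; ring

private lemma gam_sum {ι : Type*} (s : Finset ι) (f : ι → E n → ℝ)
    (hf : ∀ i ∈ s, DifferentiableAt ℝ (f i) p) :
    Gam F (fun q => ∑ i ∈ s, f i q) p = ∑ i ∈ s, Gam F (f i) p := by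
  unfold Gam; rw [fderiv_fun_sum hf]; simp

private lemma clm_decomp (φ : E n →L[ℝ] ℝ) (v : E n) :
    φ v = v.1 * φ (et n) + (∑ c, v.2.1 c * φ (ex c)) + ∑ c, v.2.2 c * φ (eu c) := by
  have hv : v = v.1 • et n + ((∑ c, v.2.1 c • ex c) + ∑ c, v.2.2 c • eu c) := by
    refine Prod.ext ?_ (Prod.ext ?_ ?_) <;>
      simp [et, ex, eu, Prod.fst_sum, Prod.snd_sum] <;>
      funext j <;>
      simp [Finset.sum_apply, Pi.single_apply, mul_ite, Finset.sum_ite_eq']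
  calc φ v = φ (v.1 • et n + ((∑ c, v.2.1 c • ex c) + ∑ c, v.2.2 c • eu c)) := by rw [← hv]
    _ = _ := by
        simp [map_add, map_smul, map_sum, smul_eq_mul]
        ring

private lemma gam_eq (F : Fin n → E n → ℝ) (f : E n → ℝ) (q : E n) :
    Gam F f q = fderiv ℝ f q (et n) + ((∑ c, q.2.2 c * fderiv ℝ f q (ex c)) +
      ∑ c, F c q * fderiv ℝ f q (eu c)) := by
  have h := clm_decomp (fderiv ℝ f q) (GamV F q)
  simp only [Gam, GamV] at *
  simpa using by linarith [h]

private lemma key (hU : IsOpen U) (F : Fin n → E n → ℝ)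
    (hF : ∀ a, ContDiffOn ℝ (⊤:ℕ∞) (F a) U)
    (hf : ContDiffOn ℝ (⊤:ℕ∞) f₀ U) (hp : p ∈ U) (v : E n) :
    fderiv ℝ (Gam F f₀) p v = Gam F (fun q => fderiv ℝ f₀ q v) p
      + (∑ c, v.2.2 c * fderiv ℝ f₀ p (ex c))
      + ∑ c, fderiv ℝ (F c) p v * fderiv ℝ f₀ p (eu c) := by
  have hdir : ∀ w : E n, DifferentiableAt ℝ (fun q => fderiv ℝ f₀ q w) p :=
    fun w => diffAt hU (smooth_dir hU hf w) hp
  have hFd : ∀ c, DifferentiableAt ℝ (F c) p := fun c => diffAt hU (hF c) hp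
  have hrw : Gam F f₀ = fun q => fderiv ℝ f₀ q (et n) +
      ((∑ c, q.2.2 c * fderiv ℝ f₀ q (ex c)) + ∑ c, F c q * fderiv ℝ f₀ q (eu c)) :=
    funext (gam_eq F f₀)
  have dB : DifferentiableAt ℝ (fun q : E n => ∑ c, q.2.2 c * fderiv ℝ f₀ q (ex c)) p :=
    DifferentiableAt.fun_sum fun c _ => (diff_u c p).mul (hdir _)
  have dC : DifferentiableAt ℝ (fun q : E n => ∑ c, F c q * fderiv ℝ f₀ q (eu c)) p :=
    DifferentiableAt.fun_sum fun c _ => (hFd c).mul (hdir _)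
  rw [hrw, fderiv_fun_add (hdir (et n)) (dB.fun_add dC)]
  simp only [ContinuousLinearMap.add_apply]
  rw [fderiv_fun_add dB dC]
  simp only [ContinuousLinearMap.add_apply]
  rw [fderiv_fun_sum (fun c _ => (diff_u c p).fun_mul (hdir (ex c))),
    fderiv_fun_sum (fun c _ => (hFd c).fun_mul (hdir (eu c)))]
  simp only [ContinuousLinearMap.coe_sum', Finset.sum_apply]
  have hm1 : ∀ c, fderiv ℝ (fun q : E n => q.2.2 c * fderiv ℝ f₀ q (ex c)) p v =
      v.2.2 c * fderiv ℝ f₀ p (ex c) +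
        p.2.2 c * fderiv ℝ (fun q => fderiv ℝ f₀ q (ex c)) p v := by
    intro c
    rw [fderiv_fun_mul (diff_u c p) (hdir _)]
    simp [fderiv_u]
    ring
  have hm2 : ∀ c, fderiv ℝ (fun q : E n => F c q * fderiv ℝ f₀ q (eu c)) p v =
      fderiv ℝ (F c) p v * fderiv ℝ f₀ p (eu c) +
        F c p * fderiv ℝ (fun q => fderiv ℝ f₀ q (eu c)) p v := by
    intro c
    rw [fderiv_fun_mul (hFd c) (hdir _)]
    simp
    ring
  simp only [hm1, hm2]
  have hsym : ∀ w : E n, fderiv ℝ (fun q => fderiv ℝ f₀ q w) p v =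
      fderiv ℝ (fun q => fderiv ℝ f₀ q v) p w := fun w => schwarz hU hf hp w v
  simp only [hsym]
  rw [gam_eq F (fun q => fderiv ℝ f₀ q v) p]
  simp [Finset.sum_add_distrib]
  ring

end Stmt0Aux
section Stmt0Main

variable {n : ℕ} {U : Set (E n)} {F : Fin n → E n → ℝ} {L : E n → ℝ} {p : E n}

/-- the velocity Hessian g_{ab} -/
private def gg (L : E n → ℝ) (a b : Fin n) (q : E n) : ℝ :=
  fderiv ℝ (fun r => fderiv ℝ L r (eu a)) q (eu b)

/-- the mixed second derivative A_{ab} = ∂²L/∂x^b∂u^a -/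
private def hAx (L : E n → ℝ) (a b : Fin n) (q : E n) : ℝ :=
  fderiv ℝ (fun r => fderiv ℝ L r (eu a)) q (ex b)

private lemma gg_smooth (hU : IsOpen U) (hL : ContDiffOn ℝ (⊤:ℕ∞) L U) (a b : Fin n) :
    ContDiffOn ℝ (⊤:ℕ∞) (gg L a b) U :=
  smooth_dir hU (smooth_dir hU hL (eu a)) (eu b)

private lemma hAx_smooth (hU : IsOpen U) (hL : ContDiffOn ℝ (⊤:ℕ∞) L U) (a b : Fin n) :
    ContDiffOn ℝ (⊤:ℕ∞) (hAx L a b) U :=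
  smooth_dir hU (smooth_dir hU hL (eu a)) (ex b)

private lemma gc_diff (hU : IsOpen U) (hF : ∀ a, ContDiffOn ℝ (⊤:ℕ∞) (F a) U)
    (hp : p ∈ U) (c b : Fin n) : DifferentiableAt ℝ (Gc F c b) p := by
  have : DifferentiableAt ℝ (fun q => fderiv ℝ (F c) q (eu b)) p :=
    diffAt hU (smooth_dir hU (hF c) (eu b)) hp
  exact (differentiableAt_const _).mul this

private lemma cond1U (hU : IsOpen U) (hL : ContDiffOn ℝ (⊤:ℕ∞) L U) (hp : p ∈ U)
    (a b : Fin n) : gg L a b p = gg L b a p :=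
  schwarz hU hL hp (eu a) (eu b)

private lemma star_eq (hU : IsOpen U) (hF : ∀ a, ContDiffOn ℝ (⊤:ℕ∞) (F a) U)
    (hL : ContDiffOn ℝ (⊤:ℕ∞) L U)
    (hEL : ∀ p ∈ U, ∀ a, Gam F (fun q => fderiv ℝ L q (eu a)) p = fderiv ℝ L p (ex a))
    (hp : p ∈ U) (a b : Fin n) :
    hAx L b a p = Gam F (gg L a b) p + hAx L a b p
      + ∑ c, fderiv ℝ (F c) p (eu b) * gg L a c p := by
  have e1 : fderiv ℝ (Gam F (fun q => fderiv ℝ L q (eu a))) p (eu b)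
      = fderiv ℝ (fun q => fderiv ℝ L q (ex a)) p (eu b) :=
    fderiv_congr_dir hU (fun q hq => hEL q hq a) hp (eu b)
  have e2 : fderiv ℝ (fun q => fderiv ℝ L q (ex a)) p (eu b) = hAx L b a p :=
    schwarz hU hL hp (ex a) (eu b)
  have e3 := key hU F hF (smooth_dir hU hL (eu a)) hp (eu b)
  have e4 : ∑ c, (eu b).2.2 c * fderiv ℝ (fun r => fderiv ℝ L r (eu a)) p (ex c)
      = hAx L a b p := by
    simp [eu, hAx, Pi.single_apply, ite_mul, Finset.sum_ite_eq']
  have e5 : Gam F (fun q => fderiv ℝ (fun r => fderiv ℝ L r (eu a)) q (eu b)) p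
      = Gam F (gg L a b) p := rfl
  have e6 : ∑ c, fderiv ℝ (F c) p (eu b) * fderiv ℝ (fun r => fderiv ℝ L r (eu a)) p (eu c)
      = ∑ c, fderiv ℝ (F c) p (eu b) * gg L a c p := rfl
  rw [e5, e4, e6] at e3
  linarith [e1, e2, e3]

private lemma cond2U (hU : IsOpen U) (hF : ∀ a, ContDiffOn ℝ (⊤:ℕ∞) (F a) U)
    (hL : ContDiffOn ℝ (⊤:ℕ∞) L U)
    (hEL : ∀ p ∈ U, ∀ a, Gam F (fun q => fderiv ℝ L q (eu a)) p = fderiv ℝ L p (ex a))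
    (hp : p ∈ U) (a b : Fin n) :
    Gam F (gg L a b) p = (∑ c, gg L a c p * Gc F c b p) + ∑ c, gg L b c p * Gc F c a p := by
  have s1 := star_eq hU hF hL hEL hp a b
  have s2 := star_eq hU hF hL hEL hp b a
  have hGamEq : Gam F (gg L a b) p = Gam F (gg L b a) p :=
    gam_congr hU (fun q hq => cond1U hU hL hq a b) hp
  have c1 : ∀ a' b' : Fin n, ∑ c, fderiv ℝ (F c) p (eu b') * gg L a' c p
      = -2 * ∑ c, gg L a' c p * Gc F c b' p := by
    intro a' b'
    rw [Finset.mul_sum]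
    refine Finset.sum_congr rfl fun c _ => ?_
    simp [Gc]
    ring
  rw [c1 a b] at s1
  rw [c1 b a] at s2
  linarith [s1, s2, hGamEq]

private lemma starstarU (hU : IsOpen U) (hF : ∀ a, ContDiffOn ℝ (⊤:ℕ∞) (F a) U)
    (hL : ContDiffOn ℝ (⊤:ℕ∞) L U)
    (hEL : ∀ p ∈ U, ∀ a, Gam F (fun q => fderiv ℝ L q (eu a)) p = fderiv ℝ L p (ex a))
    (hp : p ∈ U) (a b : Fin n) :
    hAx L a b p - hAx L b a p
      = (∑ c, gg L a c p * Gc F c b p) - ∑ c, gg L b c p * Gc F c a p := by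
  have s1 := star_eq hU hF hL hEL hp a b
  have c2 := cond2U hU hF hL hEL hp a b
  have c1 : ∑ c, fderiv ℝ (F c) p (eu b) * gg L a c p
      = -2 * ∑ c, gg L a c p * Gc F c b p := by
    rw [Finset.mul_sum]
    refine Finset.sum_congr rfl fun c _ => ?_
    simp [Gc]
    ring
  rw [c1] at s1
  linarith [s1, c2]

private lemma eqI (hU : IsOpen U) (hF : ∀ a, ContDiffOn ℝ (⊤:ℕ∞) (F a) U)
    (hL : ContDiffOn ℝ (⊤:ℕ∞) L U)
    (hEL : ∀ p ∈ U, ∀ a, Gam F (fun q => fderiv ℝ L q (eu a)) p = fderiv ℝ L p (ex a))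
    (hp : p ∈ U) (a b : Fin n) :
    Gam F (hAx L a b) p + ∑ c, fderiv ℝ (F c) p (ex b) * gg L a c p
      = Gam F (hAx L b a) p + ∑ c, fderiv ℝ (F c) p (ex a) * gg L b c p := by
  have master : ∀ a' b' : Fin n,
      fderiv ℝ (fun q => fderiv ℝ L q (ex a')) p (ex b')
        = Gam F (hAx L a' b') p + ∑ c, fderiv ℝ (F c) p (ex b') * gg L a' c p := by
    intro a' b'
    have e1 : fderiv ℝ (Gam F (fun q => fderiv ℝ L q (eu a'))) p (ex b')
        = fderiv ℝ (fun q => fderiv ℝ L q (ex a')) p (ex b') :=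
      fderiv_congr_dir hU (fun q hq => hEL q hq a') hp (ex b')
    have e3 := key hU F hF (smooth_dir hU hL (eu a')) hp (ex b')
    have e4 : ∑ c, (ex b' : E n).2.2 c *
        fderiv ℝ (fun r => fderiv ℝ L r (eu a')) p (ex c) = 0 := by
      simp [ex]
    have e5 : Gam F (fun q => fderiv ℝ (fun r => fderiv ℝ L r (eu a')) q (ex b')) p
        = Gam F (hAx L a' b') p := rfl
    have e6 : ∑ c, fderiv ℝ (F c) p (ex b') *
          fderiv ℝ (fun r => fderiv ℝ L r (eu a')) p (eu c)
        = ∑ c, fderiv ℝ (F c) p (ex b') * gg L a' c p := rfl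
    rw [e5, e4, e6] at e3
    linarith [e1, e3]
  have hsymL : fderiv ℝ (fun q => fderiv ℝ L q (ex a)) p (ex b)
      = fderiv ℝ (fun q => fderiv ℝ L q (ex b)) p (ex a) := schwarz hU hL hp (ex a) (ex b)
  rw [← master a b, ← master b a]
  exact hsymL

private lemma eqII (hU : IsOpen U) (hF : ∀ a, ContDiffOn ℝ (⊤:ℕ∞) (F a) U)
    (hL : ContDiffOn ℝ (⊤:ℕ∞) L U)
    (hEL : ∀ p ∈ U, ∀ a, Gam F (fun q => fderiv ℝ L q (eu a)) p = fderiv ℝ L p (ex a))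
    (hp : p ∈ U) (a b : Fin n) :
    Gam F (hAx L a b) p - Gam F (hAx L b a) p
      = ((∑ c, Gam F (gg L a c) p * Gc F c b p) + ∑ c, gg L a c p * Gam F (Gc F c b) p)
        - ((∑ c, Gam F (gg L b c) p * Gc F c a p)
            + ∑ c, gg L b c p * Gam F (Gc F c a) p) := by
  have dA : ∀ a' b' : Fin n, DifferentiableAt ℝ (hAx L a' b') p :=
    fun a' b' => diffAt hU (hAx_smooth hU hL a' b') hp
  have dg : ∀ a' b' : Fin n, DifferentiableAt ℝ (gg L a' b') p :=
    fun a' b' => diffAt hU (gg_smooth hU hL a' b') hp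
  have dgc : ∀ c b' : Fin n, DifferentiableAt ℝ (Gc F c b') p := fun c b' => gc_diff hU hF hp c b'
  have h1 : Gam F (fun q => hAx L a b q - hAx L b a q) p
      = Gam F (hAx L a b) p - Gam F (hAx L b a) p := gam_sub (dA a b) (dA b a)
  have h2 : Gam F (fun q => hAx L a b q - hAx L b a q) p
      = Gam F (fun q => (∑ c, gg L a c q * Gc F c b q) - ∑ c, gg L b c q * Gc F c a q) p :=
    gam_congr hU (fun q hq => starstarU hU hF hL hEL hq a b) hp
  have h3 : Gam F (fun q => (∑ c, gg L a c q * Gc F c b q) - ∑ c, gg L b c q * Gc F c a q) p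
      = Gam F (fun q => ∑ c, gg L a c q * Gc F c b q) p
        - Gam F (fun q => ∑ c, gg L b c q * Gc F c a q) p :=
    gam_sub (DifferentiableAt.fun_sum fun c _ => (dg a c).mul (dgc c b))
      (DifferentiableAt.fun_sum fun c _ => (dg b c).mul (dgc c a))
  have h4 : ∀ a' b' : Fin n, Gam F (fun q => ∑ c, gg L a' c q * Gc F c b' q) p
      = (∑ c, Gam F (gg L a' c) p * Gc F c b' p)
        + ∑ c, gg L a' c p * Gam F (Gc F c b') p := by
    intro a' b'
    rw [gam_sum Finset.univ (fun c q => gg L a' c q * Gc F c b' q) (fun c _ => (dg a' c).mul (dgc c b'))]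
    rw [← Finset.sum_add_distrib]
    exact Finset.sum_congr rfl fun c _ => gam_mul (dg a' c) (dgc c b')
  rw [h1] at h2
  rw [h3, h4 a b, h4 b a] at h2
  linarith [h2]

end Stmt0Main

/-- if Γ is the Euler–Lagrange field of a smooth Lagrangian L on U, then the
velocity Hessian g_{ab} = ∂²L/∂u^a∂u^b satisfies the four Helmholtz conditions on U. -/
theorem stmt0 {n : ℕ} (U : Set (E n)) (hU : IsOpen U) (F : Fin n → E n → ℝ)
    (hF : ∀ a, ContDiffOn ℝ (⊤ : ℕ∞) (F a) U) (L : E n → ℝ)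
    (hL : ContDiffOn ℝ (⊤ : ℕ∞) L U)
    (hEL : ∀ p ∈ U, ∀ a, Gam F (fun q => fderiv ℝ L q (eu a)) p = fderiv ℝ L p (ex a)) :
    Helmholtz F U (fun a b p => fderiv ℝ (fun q => fderiv ℝ L q (eu a)) p (eu b)) := by
  refine ⟨?_, ?_, ?_, ?_⟩
  · intro p hp a b
    exact cond1U hU hL hp a b
  · intro p hp a b
    exact cond2U hU hF hL hEL hp a b
  · intro p hp a b
    show (∑ c, gg L a c p * Phi F c b p) = ∑ c, gg L b c p * Phi F c a p
    have I := eqI hU hF hL hEL hp a b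
    have II := eqII hU hF hL hEL hp a b
    have c2 : ∀ a' c' : Fin n, Gam F (gg L a' c') p
        = (∑ d, gg L a' d p * Gc F d c' p) + ∑ d, gg L c' d p * Gc F d a' p :=
      fun a' c' => cond2U hU hF hL hEL hp a' c'
    have sym : ∀ c d : Fin n, gg L c d p = gg L d c p := fun c d => cond1U hU hL hp c d
    have M : ∀ a' b' : Fin n, ∑ c, Gam F (gg L a' c) p * Gc F c b' p
        = (∑ c, ∑ d, gg L a' d p * Gc F d c p * Gc F c b' p)
          + ∑ c, ∑ d, gg L c d p * Gc F d a' p * Gc F c b' p := by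
      intro a' b'
      rw [← Finset.sum_add_distrib]
      refine Finset.sum_congr rfl fun c _ => ?_
      rw [c2 a' c, add_mul, Finset.sum_mul, Finset.sum_mul]
    have S1 : ∀ a' b' : Fin n, ∑ c, ∑ d, gg L a' d p * Gc F d c p * Gc F c b' p
        = ∑ c, ∑ d, gg L a' c p * (Gc F d b' p * Gc F c d p) := by
      intro a' b'
      rw [Finset.sum_comm]
      exact Finset.sum_congr rfl fun c _ => Finset.sum_congr rfl fun d _ => by ring
    have S2 : (∑ c, ∑ d, gg L c d p * Gc F d a p * Gc F c b p)
        = ∑ c, ∑ d, gg L c d p * Gc F d b p * Gc F c a p := by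
      rw [Finset.sum_comm]
      refine Finset.sum_congr rfl fun c _ => Finset.sum_congr rfl fun d _ => ?_
      rw [sym d c]
      ring
    have comm : ∀ a' b' : Fin n, ∑ c, fderiv ℝ (F c) p (ex b') * gg L a' c p
        = ∑ c, gg L a' c p * fderiv ℝ (F c) p (ex b') :=
      fun a' b' => Finset.sum_congr rfl fun c _ => mul_comm _ _
    have expand : ∀ a' b' : Fin n, ∑ c, gg L a' c p * Phi F c b' p
        = -(∑ c, gg L a' c p * fderiv ℝ (F c) p (ex b'))
          - (∑ c, ∑ d, gg L a' c p * (Gc F d b' p * Gc F c d p))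
          - ∑ c, gg L a' c p * Gam F (Gc F c b') p := by
      intro a' b'
      have e : ∀ c : Fin n, gg L a' c p * Phi F c b' p
          = -(gg L a' c p * fderiv ℝ (F c) p (ex b'))
            - (∑ d, gg L a' c p * (Gc F d b' p * Gc F c d p))
            - gg L a' c p * Gam F (Gc F c b') p := by
        intro c
        simp only [Phi, mul_sub, mul_neg, Finset.mul_sum]
      rw [Finset.sum_congr rfl fun c _ => e c]
      rw [Finset.sum_sub_distrib, Finset.sum_sub_distrib, Finset.sum_neg_distrib]
    rw [M a b, M b a, S1 a b, S1 b a] at II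
    rw [comm a b, comm b a] at I
    rw [expand a b, expand b a]
    linarith [I, II, S2]
  · intro p hp a b c
    exact schwarz hU (smooth_dir hU hL (eu a)) hp (eu b) (eu c)

end IP
end
end

section
/- Let g = (g_{ab}) be a smooth matrix-valued function on U and set Ω := g_{ab} ψ^a ∧ θ^b. If at every point of U and for all indices a,b,c one has dΩ(Γ, V_a, V_b) = 0, dΩ(Γ, V_a, H_b) = 0, dΩ(Γ, H_a, H_b) = 0 and dΩ(H_a, V_b, V_c) = 0, then also dΩ(H_a, H_b, V_c) = 0 and dΩ(H_a, H_b, H_c) = 0 at every point for all indices; consequently dΩ = 0 on U. -/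
/- Setting: the evolution space E = ℝ × ℝ^n × ℝ^n with coordinates (t, x^a, u^a),
   a SODE ẍ^a = F^a(t,x,ẋ), and all the associated geometric objects. -/

noncomputable section

namespace IP
section Stmt4Aux

variable {n : ℕ}

/-- the coordinate continuous linear map `q ↦ q.2.2 c` -/
def cu (n : ℕ) (c : Fin n) : E n →L[ℝ] ℝ :=
  (ContinuousLinearMap.proj c).comp ((ContinuousLinearMap.snd ℝ (Fin n → ℝ) (Fin n → ℝ)).comp
    (ContinuousLinearMap.snd ℝ ℝ ((Fin n → ℝ) × (Fin n → ℝ))))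

lemma cu_apply (c : Fin n) (v : E n) : cu n c v = v.2.2 c := rfl

lemma decompE (v : E n) :
    v = v.1 • et n + ((∑ a, v.2.1 a • ex a) + ∑ a, v.2.2 a • eu a) := by
  refine Prod.ext ?_ (Prod.ext ?_ ?_)
  · simp [et, ex, eu, Prod.fst_sum]
  · funext b
    simp [et, ex, eu, Prod.fst_sum, Prod.snd_sum, Finset.sum_apply, Pi.single_apply,
      mul_ite, Finset.sum_ite_eq']
  · funext b
    simp [et, ex, eu, Prod.fst_sum, Prod.snd_sum, Finset.sum_apply, Pi.single_apply,
      mul_ite, Finset.sum_ite_eq']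

lemma theta_add (b : Fin n) (q v w : E n) :
    theta b q (v + w) = theta b q v + theta b q w := by
  simp [theta]; ring

lemma theta_smul (b : Fin n) (q : E n) (c : ℝ) (v : E n) :
    theta b q (c • v) = c * theta b q v := by
  simp [theta]; ring

lemma psi_add (F : Fin n → E n → ℝ) (a : Fin n) (q v w : E n) :
    psi F a q (v + w) = psi F a q v + psi F a q w := by
  simp only [psi, theta_add, mul_add, Finset.sum_add_distrib, Prod.snd_add, Prod.fst_add,
    Pi.add_apply]
  ring

lemma psi_smul (F : Fin n → E n → ℝ) (a : Fin n) (q : E n) (c : ℝ) (v : E n) :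
    psi F a q (c • v) = c * psi F a q v := by
  simp only [psi, theta_smul, Prod.smul_snd, Prod.smul_fst, Pi.smul_apply, smul_eq_mul,
    Finset.mul_sum]
  have h : ∑ x : Fin n, Gc F a x q * (c * theta x q v)
      = c * ∑ x : Fin n, Gc F a x q * theta x q v := by
    rw [Finset.mul_sum]; exact Finset.sum_congr rfl fun b _ => by ring
  rw [h]; ring

lemma Omega_antisym (F : Fin n → E n → ℝ) (g : Fin n → Fin n → E n → ℝ) (q v w : E n) :
    OmegaG F g q w v = -OmegaG F g q v w := by
  unfold OmegaG
  rw [← Finset.sum_neg_distrib]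
  refine Finset.sum_congr rfl fun a _ => ?_
  rw [← Finset.sum_neg_distrib]
  refine Finset.sum_congr rfl fun b _ => ?_
  simp [w11]; ring

lemma Omega_add_left (F : Fin n → E n → ℝ) (g : Fin n → Fin n → E n → ℝ) (q v v' w : E n) :
    OmegaG F g q (v + v') w = OmegaG F g q v w + OmegaG F g q v' w := by
  unfold OmegaG
  rw [← Finset.sum_add_distrib]
  refine Finset.sum_congr rfl fun a _ => ?_
  rw [← Finset.sum_add_distrib]
  refine Finset.sum_congr rfl fun b _ => ?_
  simp [w11, psi_add, theta_add]; ring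

lemma Omega_smul_left (F : Fin n → E n → ℝ) (g : Fin n → Fin n → E n → ℝ) (q : E n) (c : ℝ)
    (v w : E n) : OmegaG F g q (c • v) w = c * OmegaG F g q v w := by
  unfold OmegaG
  rw [Finset.mul_sum]
  refine Finset.sum_congr rfl fun a _ => ?_
  rw [Finset.mul_sum]
  refine Finset.sum_congr rfl fun b _ => ?_
  simp [w11, psi_smul, theta_smul]; ring

lemma Omega_add_right (F : Fin n → E n → ℝ) (g : Fin n → Fin n → E n → ℝ) (q v w w' : E n) :
    OmegaG F g q v (w + w') = OmegaG F g q v w + OmegaG F g q v w' := by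
  rw [Omega_antisym F g q (w + w') v, Omega_add_left, Omega_antisym F g q w v,
    Omega_antisym F g q w' v]
  ring

lemma Omega_smul_right (F : Fin n → E n → ℝ) (g : Fin n → Fin n → E n → ℝ) (q : E n) (c : ℝ)
    (v w : E n) : OmegaG F g q v (c • w) = c * OmegaG F g q v w := by
  rw [Omega_antisym F g q (c • w) v, Omega_smul_left, Omega_antisym F g q w v]
  ring

end Stmt4Aux
end IP

namespace IP
section Stmt4Aux2

variable {n : ℕ} {U : Set (E n)} {F : Fin n → E n → ℝ} {g : Fin n → Fin n → E n → ℝ}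
  {p : E n}

lemma topadd : ((⊤:ℕ∞) : WithTop ℕ∞) + 1 ≤ ((⊤:ℕ∞) : WithTop ℕ∞) := by
  exact_mod_cast le_top

lemma smooth_Gc (hU : IsOpen U) (hF : ∀ a, ContDiffOn ℝ (⊤:ℕ∞) (F a) U) (a b : Fin n) :
    ContDiffOn ℝ (⊤:ℕ∞) (Gc F a b) U := by
  have h1 : ContDiffOn ℝ (⊤:ℕ∞) (fderiv ℝ (F a)) U := (hF a).fderiv_of_isOpen hU topadd
  exact contDiffOn_const.mul (h1.clm_apply contDiffOn_const)

lemma smooth_theta (b : Fin n) (w : E n) :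
    ContDiffOn ℝ (⊤:ℕ∞) (fun q : E n => theta b q w) U := by
  have : ContDiffOn ℝ (⊤:ℕ∞) (fun q : E n => q.2.2 b) U := (cu n b).contDiff.contDiffOn
  exact contDiffOn_const.sub (this.mul contDiffOn_const)

lemma smooth_psi (hU : IsOpen U) (hF : ∀ a, ContDiffOn ℝ (⊤:ℕ∞) (F a) U) (a : Fin n)
    (w : E n) : ContDiffOn ℝ (⊤:ℕ∞) (fun q => psi F a q w) U := by
  unfold psi
  exact (contDiffOn_const.sub ((hF a).mul contDiffOn_const)).add
    (ContDiffOn.sum fun b _ => (smooth_Gc hU hF a b).mul (smooth_theta b w))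

lemma smooth_B (hU : IsOpen U) (hF : ∀ a, ContDiffOn ℝ (⊤:ℕ∞) (F a) U)
    (hg : ∀ a b, ContDiffOn ℝ (⊤:ℕ∞) (g a b) U) (v w : E n) :
    ContDiffOn ℝ (⊤:ℕ∞) (fun q => OmegaG F g q v w) U := by
  unfold OmegaG w11
  exact ContDiffOn.sum fun a _ => ContDiffOn.sum fun b _ => (hg a b).mul
    (((smooth_psi hU hF a v).mul (smooth_theta b w)).sub
      ((smooth_psi hU hF a w).mul (smooth_theta b v)))

lemma diff_B (hU : IsOpen U) (hF : ∀ a, ContDiffOn ℝ (⊤:ℕ∞) (F a) U)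
    (hg : ∀ a b, ContDiffOn ℝ (⊤:ℕ∞) (g a b) U) (hp : p ∈ U) (v w : E n) :
    DifferentiableAt ℝ (fun q => OmegaG F g q v w) p :=
  ((smooth_B hU hF hg v w).contDiffAt (hU.mem_nhds hp)).differentiableAt
    (by simp)

lemma smooth_dB (hU : IsOpen U) (hF : ∀ a, ContDiffOn ℝ (⊤:ℕ∞) (F a) U)
    (hg : ∀ a b, ContDiffOn ℝ (⊤:ℕ∞) (g a b) U) (v w z : E n) :
    ContDiffOn ℝ (⊤:ℕ∞) (fun q => fderiv ℝ (fun q' => OmegaG F g q' v w) q z) U :=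
  (((smooth_B hU hF hg v w).fderiv_of_isOpen hU topadd).clm_apply contDiffOn_const)

lemma diff_dB (hU : IsOpen U) (hF : ∀ a, ContDiffOn ℝ (⊤:ℕ∞) (F a) U)
    (hg : ∀ a b, ContDiffOn ℝ (⊤:ℕ∞) (g a b) U) (hp : p ∈ U) (v w z : E n) :
    DifferentiableAt ℝ (fun q => fderiv ℝ (fun q' => OmegaG F g q' v w) q z) p :=
  ((smooth_dB hU hF hg v w z).contDiffAt (hU.mem_nhds hp)).differentiableAt
    (by simp)

lemma diff_A (hU : IsOpen U) (hF : ∀ a, ContDiffOn ℝ (⊤:ℕ∞) (F a) U)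
    (hg : ∀ a b, ContDiffOn ℝ (⊤:ℕ∞) (g a b) U) (hp : p ∈ U) (v1 v2 v3 : E n) :
    DifferentiableAt ℝ (fun q => d2 (OmegaG F g) q v1 v2 v3) p := by
  unfold d2
  exact ((diff_dB hU hF hg hp v2 v3 v1).sub (diff_dB hU hF hg hp v1 v3 v2)).add
    (diff_dB hU hF hg hp v1 v2 v3)

/-- unconditional antisymmetry of d2 in the first two slots -/
lemma d2_swap12 (q v1 v2 v3 : E n) :
    d2 (OmegaG F g) q v2 v1 v3 = -d2 (OmegaG F g) q v1 v2 v3 := by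
  unfold d2
  have h12 : (fun q => OmegaG F g q v2 v1) = fun q => -OmegaG F g q v1 v2 :=
    funext fun q => Omega_antisym F g q v1 v2
  rw [h12, fderiv_fun_neg]
  simp only [ContinuousLinearMap.neg_apply]
  ring

lemma d2_swap23 (q v1 v2 v3 : E n) :
    d2 (OmegaG F g) q v1 v3 v2 = -d2 (OmegaG F g) q v1 v2 v3 := by
  unfold d2
  have h23 : (fun q => OmegaG F g q v3 v2) = fun q => -OmegaG F g q v2 v3 :=
    funext fun q => Omega_antisym F g q v2 v3
  rw [h23, fderiv_fun_neg]
  simp only [ContinuousLinearMap.neg_apply]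
  ring

lemma d2_diag12 (q v w : E n) : d2 (OmegaG F g) q v v w = 0 := by
  have := d2_swap12 (F := F) (g := g) q v v w; linarith

lemma d2_diag23 (q v w : E n) : d2 (OmegaG F g) q v w w = 0 := by
  have := d2_swap23 (F := F) (g := g) q v w w; linarith

lemma d2_lin3 (hU : IsOpen U) (hF : ∀ a, ContDiffOn ℝ (⊤:ℕ∞) (F a) U)
    (hg : ∀ a b, ContDiffOn ℝ (⊤:ℕ∞) (g a b) U) (hp : p ∈ U) (v1 v2 : E n) :
    IsLinearMap ℝ (fun v3 => d2 (OmegaG F g) p v1 v2 v3) := by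
  constructor
  · intro x y
    unfold d2
    have e2 : (fun q => OmegaG F g q v2 (x + y))
        = fun q => OmegaG F g q v2 x + OmegaG F g q v2 y :=
      funext fun q => Omega_add_right F g q v2 x y
    have e1 : (fun q => OmegaG F g q v1 (x + y))
        = fun q => OmegaG F g q v1 x + OmegaG F g q v1 y :=
      funext fun q => Omega_add_right F g q v1 x y
    rw [e2, e1, fderiv_fun_add (diff_B hU hF hg hp v2 x) (diff_B hU hF hg hp v2 y),
      fderiv_fun_add (diff_B hU hF hg hp v1 x) (diff_B hU hF hg hp v1 y)]
    simp only [ContinuousLinearMap.add_apply, map_add]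
    ring
  · intro c x
    unfold d2
    have e2 : (fun q => OmegaG F g q v2 (c • x)) = fun q => c • OmegaG F g q v2 x :=
      funext fun q => Omega_smul_right F g q c v2 x
    have e1 : (fun q => OmegaG F g q v1 (c • x)) = fun q => c • OmegaG F g q v1 x :=
      funext fun q => Omega_smul_right F g q c v1 x
    rw [e2, e1, fderiv_fun_const_smul (diff_B hU hF hg hp v2 x) c,
      fderiv_fun_const_smul (diff_B hU hF hg hp v1 x) c]
    simp only [ContinuousLinearMap.smul_apply, map_smul, smul_eq_mul]
    ring

lemma d2_lin2 (hU : IsOpen U) (hF : ∀ a, ContDiffOn ℝ (⊤:ℕ∞) (F a) U)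
    (hg : ∀ a b, ContDiffOn ℝ (⊤:ℕ∞) (g a b) U) (hp : p ∈ U) (v1 v3 : E n) :
    IsLinearMap ℝ (fun v2 => d2 (OmegaG F g) p v1 v2 v3) := by
  constructor
  · intro x y
    have h1 := d2_swap23 (F := F) (g := g) p v1 (x + y) v3
    have h2 := d2_swap23 (F := F) (g := g) p v1 x v3
    have h3 := d2_swap23 (F := F) (g := g) p v1 y v3
    have h4 := (d2_lin3 hU hF hg hp v1 v3).map_add x y
    linarith
  · intro c x
    have h1 := d2_swap23 (F := F) (g := g) p v1 (c • x) v3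
    have h2 := d2_swap23 (F := F) (g := g) p v1 x v3
    have h4 := (d2_lin3 hU hF hg hp v1 v3).map_smul c x
    simp only [smul_eq_mul] at h4
    simp only [smul_eq_mul]
    linear_combination h1 - h4 - c * h2

lemma d2_lin1 (hU : IsOpen U) (hF : ∀ a, ContDiffOn ℝ (⊤:ℕ∞) (F a) U)
    (hg : ∀ a b, ContDiffOn ℝ (⊤:ℕ∞) (g a b) U) (hp : p ∈ U) (v2 v3 : E n) :
    IsLinearMap ℝ (fun v1 => d2 (OmegaG F g) p v1 v2 v3) := by
  constructor
  · intro x y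
    have h3 := d2_swap12 (F := F) (g := g) p v2 (x + y) v3
    have hx := d2_swap12 (F := F) (g := g) p v2 x v3
    have hy := d2_swap12 (F := F) (g := g) p v2 y v3
    have h4 := (d2_lin2 hU hF hg hp v2 v3).map_add x y
    linarith
  · intro c x
    have h3 := d2_swap12 (F := F) (g := g) p v2 (c • x) v3
    have h2 := d2_swap12 (F := F) (g := g) p v2 x v3
    have h4 := (d2_lin2 hU hF hg hp v2 v3).map_smul c x
    simp only [smul_eq_mul] at h4
    simp only [smul_eq_mul]
    linear_combination h3 - h4 - c * h2

end Stmt4Aux2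
end IP

namespace IP
section Stmt4Aux3

variable {n : ℕ} {U : Set (E n)} {F : Fin n → E n → ℝ} {g : Fin n → Fin n → E n → ℝ}
  {p : E n}

lemma d2_basis3 (hU : IsOpen U) (hF : ∀ a, ContDiffOn ℝ (⊤:ℕ∞) (F a) U)
    (hg : ∀ a b, ContDiffOn ℝ (⊤:ℕ∞) (g a b) U) (hp : p ∈ U) (v1 v2 w : E n) :
    d2 (OmegaG F g) p v1 v2 w = w.1 * d2 (OmegaG F g) p v1 v2 (et n)
      + (∑ a, w.2.1 a * d2 (OmegaG F g) p v1 v2 (ex a))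
      + ∑ a, w.2.2 a * d2 (OmegaG F g) p v1 v2 (eu a) := by
  have L := d2_lin3 hU hF hg hp v1 v2
  let lm := IsLinearMap.mk' _ L
  have hw : ∀ u, d2 (OmegaG F g) p v1 v2 u = lm u := fun _ => rfl
  rw [hw w]
  conv_lhs => rw [decompE w]
  rw [map_add, map_add, map_smul, map_sum, map_sum]
  simp only [map_smul, smul_eq_mul]
  simp only [← hw]
  ring

lemma d2_basis2 (hU : IsOpen U) (hF : ∀ a, ContDiffOn ℝ (⊤:ℕ∞) (F a) U)
    (hg : ∀ a b, ContDiffOn ℝ (⊤:ℕ∞) (g a b) U) (hp : p ∈ U) (v1 w v3 : E n) :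
    d2 (OmegaG F g) p v1 w v3 = w.1 * d2 (OmegaG F g) p v1 (et n) v3
      + (∑ a, w.2.1 a * d2 (OmegaG F g) p v1 (ex a) v3)
      + ∑ a, w.2.2 a * d2 (OmegaG F g) p v1 (eu a) v3 := by
  have L := d2_lin2 hU hF hg hp v1 v3
  let lm := IsLinearMap.mk' _ L
  have hw : ∀ u, d2 (OmegaG F g) p v1 u v3 = lm u := fun _ => rfl
  rw [hw w]
  conv_lhs => rw [decompE w]
  rw [map_add, map_add, map_smul, map_sum, map_sum]
  simp only [map_smul, smul_eq_mul]
  simp only [← hw]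
  ring

lemma d2_basis1 (hU : IsOpen U) (hF : ∀ a, ContDiffOn ℝ (⊤:ℕ∞) (F a) U)
    (hg : ∀ a b, ContDiffOn ℝ (⊤:ℕ∞) (g a b) U) (hp : p ∈ U) (w v2 v3 : E n) :
    d2 (OmegaG F g) p w v2 v3 = w.1 * d2 (OmegaG F g) p (et n) v2 v3
      + (∑ a, w.2.1 a * d2 (OmegaG F g) p (ex a) v2 v3)
      + ∑ a, w.2.2 a * d2 (OmegaG F g) p (eu a) v2 v3 := by
  have L := d2_lin1 hU hF hg hp v2 v3
  let lm := IsLinearMap.mk' _ L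
  have hw : ∀ u, d2 (OmegaG F g) p u v2 v3 = lm u := fun _ => rfl
  rw [hw w]
  conv_lhs => rw [decompE w]
  rw [map_add, map_add, map_smul, map_sum, map_sum]
  simp only [map_smul, smul_eq_mul]
  simp only [← hw]
  ring

lemma fderiv_vanish (hU : IsOpen U) (hp : p ∈ U) {f : E n → ℝ}
    (hf : ∀ q ∈ U, f q = 0) : fderiv ℝ f p = 0 := by
  have h : f =ᶠ[nhds p] fun _ => (0:ℝ) := Filter.eventuallyEq_of_mem (hU.mem_nhds hp) hf
  rw [h.fderiv_eq]
  exact fderiv_const_apply 0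

lemma Z_uuu (q : E n) (a b c : Fin n) : d2 (OmegaG F g) q (eu a) (eu b) (eu c) = 0 := by
  have hv : ∀ (x y : Fin n), (fun q => OmegaG F g q (eu x) (eu y)) = fun _ => (0:ℝ) := by
    intro x y
    funext q
    simp [OmegaG, w11, theta, eu]
  unfold d2
  rw [hv, hv, hv]
  simp

lemma sndDeriv (hU : IsOpen U) (hF : ∀ a, ContDiffOn ℝ (⊤:ℕ∞) (F a) U)
    (hg : ∀ a b, ContDiffOn ℝ (⊤:ℕ∞) (g a b) U) (hp : p ∈ U) (v w z : E n) :
    fderiv ℝ (fun q => fderiv ℝ (fun q' => OmegaG F g q' v w) q z) p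
      = (fderiv ℝ (fderiv ℝ (fun q' => OmegaG F g q' v w)) p).flip z := by
  have hc : DifferentiableAt ℝ (fderiv ℝ (fun q' => OmegaG F g q' v w)) p :=
    (((smooth_B hU hF hg v w).fderiv_of_isOpen hU topadd).contDiffAt
      (hU.mem_nhds hp)).differentiableAt (by simp)
  have h := fderiv_clm_apply hc (differentiableAt_const z)
  simpa using h

lemma symm2 (hU : IsOpen U) (hF : ∀ a, ContDiffOn ℝ (⊤:ℕ∞) (F a) U)
    (hg : ∀ a b, ContDiffOn ℝ (⊤:ℕ∞) (g a b) U) (hp : p ∈ U) (v w y z : E n) :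
    fderiv ℝ (fderiv ℝ (fun q' => OmegaG F g q' v w)) p y z
      = fderiv ℝ (fderiv ℝ (fun q' => OmegaG F g q' v w)) p z y :=
  (((smooth_B hU hF hg v w).contDiffAt (hU.mem_nhds hp)).isSymmSndFDerivAt
    (by
    have : ((2:ℕ∞) : WithTop ℕ∞) ≤ ((⊤:ℕ∞) : WithTop ℕ∞) := by exact_mod_cast le_top
    simpa using this)) y z

lemma fderiv_A_eq (hU : IsOpen U) (hF : ∀ a, ContDiffOn ℝ (⊤:ℕ∞) (F a) U)
    (hg : ∀ a b, ContDiffOn ℝ (⊤:ℕ∞) (g a b) U) (hp : p ∈ U) (v1 v2 v3 w0 : E n) :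
    fderiv ℝ (fun q => d2 (OmegaG F g) q v1 v2 v3) p w0
      = fderiv ℝ (fderiv ℝ (fun q' => OmegaG F g q' v2 v3)) p w0 v1
        - fderiv ℝ (fderiv ℝ (fun q' => OmegaG F g q' v1 v3)) p w0 v2
        + fderiv ℝ (fderiv ℝ (fun q' => OmegaG F g q' v1 v2)) p w0 v3 := by
  unfold d2
  rw [fderiv_fun_add ((diff_dB hU hF hg hp v2 v3 v1).fun_sub (diff_dB hU hF hg hp v1 v3 v2))
    (diff_dB hU hF hg hp v1 v2 v3),
    fderiv_fun_sub (diff_dB hU hF hg hp v2 v3 v1) (diff_dB hU hF hg hp v1 v3 v2),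
    sndDeriv hU hF hg hp v2 v3 v1, sndDeriv hU hF hg hp v1 v3 v2,
    sndDeriv hU hF hg hp v1 v2 v3]
  simp [ContinuousLinearMap.flip_apply]

/-- the identity expressing d(dΩ) = 0 -/
lemma identI (hU : IsOpen U) (hF : ∀ a, ContDiffOn ℝ (⊤:ℕ∞) (F a) U)
    (hg : ∀ a b, ContDiffOn ℝ (⊤:ℕ∞) (g a b) U) (hp : p ∈ U) (w0 v1 v2 v3 : E n) :
    fderiv ℝ (fun q => d2 (OmegaG F g) q v1 v2 v3) p w0
      = fderiv ℝ (fun q => d2 (OmegaG F g) q w0 v2 v3) p v1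
        - fderiv ℝ (fun q => d2 (OmegaG F g) q w0 v1 v3) p v2
        + fderiv ℝ (fun q => d2 (OmegaG F g) q w0 v1 v2) p v3 := by
  rw [fderiv_A_eq hU hF hg hp v1 v2 v3 w0, fderiv_A_eq hU hF hg hp w0 v2 v3 v1,
    fderiv_A_eq hU hF hg hp w0 v1 v3 v2, fderiv_A_eq hU hF hg hp w0 v1 v2 v3]
  linarith [symm2 hU hF hg hp v2 v3 w0 v1, symm2 hU hF hg hp v1 v3 w0 v2,
    symm2 hU hF hg hp v1 v2 w0 v3, symm2 hU hF hg hp w0 v3 v1 v2,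
    symm2 hU hF hg hp w0 v2 v1 v3, symm2 hU hF hg hp w0 v1 v2 v3]

end Stmt4Aux3
end IP

namespace IP
section Stmt4Aux4

variable {n : ℕ} {U : Set (E n)} {F : Fin n → E n → ℝ} {g : Fin n → Fin n → E n → ℝ}
  {p : E n}

lemma identII (hU : IsOpen U) (hF : ∀ a, ContDiffOn ℝ (⊤:ℕ∞) (F a) U)
    (hg : ∀ a b, ContDiffOn ℝ (⊤:ℕ∞) (g a b) U) (hp : p ∈ U)
    (hstar : ∀ q ∈ U, ∀ v w, d2 (OmegaG F g) q (GamV F q) v w = 0) (v w z : E n) :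
    fderiv ℝ (fun q => d2 (OmegaG F g) q (GamV F p) v w) p z
      = -(∑ c, z.2.2 c * d2 (OmegaG F g) p (ex c) v w)
        - ∑ c, fderiv ℝ (F c) p z * d2 (OmegaG F g) p (eu c) v w := by
  have hEV : ∀ q ∈ U, d2 (OmegaG F g) q (GamV F p) v w
      = -(∑ c, (q.2.2 c - p.2.2 c) * d2 (OmegaG F g) q (ex c) v w) - ∑ c, (F c q - F c p) * d2 (OmegaG F g) q (eu c) v w := by
    intro q hq
    have e1 := d2_basis1 hU hF hg hq (GamV F p) v w
    have e2 := d2_basis1 hU hF hg hq (GamV F q) v w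
    rw [hstar q hq v w] at e2
    simp only [GamV] at e1 e2 ⊢
    rw [e1]
    simp only [sub_mul, Finset.sum_sub_distrib]
    linarith [e2]
  have hfe : fderiv ℝ (fun q => d2 (OmegaG F g) q (GamV F p) v w) p
      = fderiv ℝ (fun q => -(∑ c, (q.2.2 c - p.2.2 c) * d2 (OmegaG F g) q (ex c) v w)
          - ∑ c, (F c q - F c p) * d2 (OmegaG F g) q (eu c) v w) p :=
    Filter.EventuallyEq.fderiv_eq (Filter.eventuallyEq_of_mem (hU.mem_nhds hp) hEV)
  have hAx : ∀ c, HasFDerivAt (fun q => d2 (OmegaG F g) q (ex c) v w) (fderiv ℝ (fun q => d2 (OmegaG F g) q (ex c) v w) p) p :=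
    fun c => (diff_A hU hF hg hp (ex c) v w).hasFDerivAt
  have hAu : ∀ c, HasFDerivAt (fun q => d2 (OmegaG F g) q (eu c) v w) (fderiv ℝ (fun q => d2 (OmegaG F g) q (eu c) v w) p) p :=
    fun c => (diff_A hU hF hg hp (eu c) v w).hasFDerivAt
  have hs1 : ∀ c, HasFDerivAt (fun q : E n => q.2.2 c - p.2.2 c) (cu n c : E n →L[ℝ] ℝ) p :=
    fun c => ((cu n c).hasFDerivAt (x := p)).sub_const _
  have hFd : ∀ c, DifferentiableAt ℝ (F c) p := fun c =>
    ((hF c).contDiffAt (hU.mem_nhds hp)).differentiableAt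
      (by simp)
  have hs2 : ∀ c, HasFDerivAt (fun q : E n => F c q - F c p) (fderiv ℝ (F c) p) p :=
    fun c => ((hFd c).hasFDerivAt).sub_const _
  have hD : HasFDerivAt (fun q => -(∑ c, (q.2.2 c - p.2.2 c) * d2 (OmegaG F g) q (ex c) v w)
        - ∑ c, (F c q - F c p) * d2 (OmegaG F g) q (eu c) v w)
      ((-(∑ c, ((p.2.2 c - p.2.2 c) • (fderiv ℝ (fun q => d2 (OmegaG F g) q (ex c) v w) p) + d2 (OmegaG F g) p (ex c) v w • (cu n c))))
        - ∑ c, ((F c p - F c p) • (fderiv ℝ (fun q => d2 (OmegaG F g) q (eu c) v w) p) + d2 (OmegaG F g) p (eu c) v w • (fderiv ℝ (F c) p))) p := by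
    exact ((HasFDerivAt.fun_sum (fun c _ => (hs1 c).fun_mul (hAx c))).fun_neg).fun_sub
      (HasFDerivAt.fun_sum (fun c _ => (hs2 c).fun_mul (hAu c)))
  rw [hfe, hD.fderiv]
  simp only [ContinuousLinearMap.coe_sub', Pi.sub_apply, ContinuousLinearMap.neg_apply,
    ContinuousLinearMap.coe_sum', Finset.sum_apply, ContinuousLinearMap.add_apply,
    ContinuousLinearMap.coe_smul', Pi.smul_apply, smul_eq_mul, sub_self, zero_mul,
    zero_add, cu_apply]
  congr 1
  · congr 1
    exact Finset.sum_congr rfl fun c _ => by ring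
  · exact Finset.sum_congr rfl fun c _ => by ring

end Stmt4Aux4
end IP

namespace IP
section Stmt4Comp
variable {n : ℕ} {F : Fin n → E n → ℝ} {p : E n}
lemma et1 : (et n).1 = 1 := rfl
lemma et21 (x : Fin n) : (et n).2.1 x = 0 := rfl
lemma et22 (x : Fin n) : (et n).2.2 x = 0 := rfl
lemma exc1 (a : Fin n) : (ex a).1 = 0 := rfl
lemma exc21 (a x : Fin n) : (ex a).2.1 x = (Pi.single a 1 : Fin n → ℝ) x := rfl
lemma exc22 (a x : Fin n) : (ex a).2.2 x = 0 := rfl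
lemma euc1 (a : Fin n) : (eu a).1 = 0 := rfl
lemma euc21 (a x : Fin n) : (eu a).2.1 x = 0 := rfl
lemma euc22 (a x : Fin n) : (eu a).2.2 x = (Pi.single a 1 : Fin n → ℝ) x := rfl
lemma GamV1 : (GamV F p).1 = 1 := rfl
lemma GamV21 (x : Fin n) : (GamV F p).2.1 x = p.2.2 x := rfl
lemma GamV22 (x : Fin n) : (GamV F p).2.2 x = F x p := rfl
lemma Hv1 (a : Fin n) : (Hv F a p).1 = 0 := rfl
lemma Hv21 (a x : Fin n) : (Hv F a p).2.1 x = (Pi.single a 1 : Fin n → ℝ) x := rfl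
lemma Hv22 (a x : Fin n) : (Hv F a p).2.2 x = -(Gc F x a p) := rfl
lemma Vv_eq (a : Fin n) : Vv a = eu (n := n) a := rfl
end Stmt4Comp
end IP

namespace IP

/-- for Ω = g_{ab} ψ^a ∧ θ^b, the four conditions
dΩ(Γ,V,V) = dΩ(Γ,V,H) = dΩ(Γ,H,H) = dΩ(H,V,V) = 0 imply the remaining ones
dΩ(H,H,V) = dΩ(H,H,H) = 0, and consequently dΩ = 0 on U. -/
theorem stmt4 {n : ℕ} (U : Set (E n)) (hU : IsOpen U) (F : Fin n → E n → ℝ)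
    (hF : ∀ a, ContDiffOn ℝ (⊤ : ℕ∞) (F a) U) (g : Fin n → Fin n → E n → ℝ)
    (hg : ∀ a b, ContDiffOn ℝ (⊤ : ℕ∞) (g a b) U)
    (h1 : ∀ p ∈ U, ∀ a b, d2 (OmegaG F g) p (GamV F p) (Vv a) (Vv b) = 0)
    (h2 : ∀ p ∈ U, ∀ a b, d2 (OmegaG F g) p (GamV F p) (Vv a) (Hv F b p) = 0)
    (h3 : ∀ p ∈ U, ∀ a b, d2 (OmegaG F g) p (GamV F p) (Hv F a p) (Hv F b p) = 0)
    (h4 : ∀ p ∈ U, ∀ a b c, d2 (OmegaG F g) p (Hv F a p) (Vv b) (Vv c) = 0) :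
    (∀ p ∈ U, ∀ a b c, d2 (OmegaG F g) p (Hv F a p) (Hv F b p) (Vv c) = 0 ∧
        d2 (OmegaG F g) p (Hv F a p) (Hv F b p) (Hv F c p) = 0) ∧
    (∀ p ∈ U, ∀ v1 v2 v3 : E n, d2 (OmegaG F g) p v1 v2 v3 = 0) := by
  -- rewrite hypotheses with eu in place of Vv (definitional)
  have H1 : ∀ p ∈ U, ∀ a b, d2 (OmegaG F g) p (GamV F p) (eu a) (eu b) = 0 :=
    fun p hp a b => h1 p hp a b
  -- dΩ(H,V,V)=0 in coordinates: dΩ(∂x,V,V)=0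
  have H4 : ∀ p ∈ U, ∀ a b c, d2 (OmegaG F g) p (ex a) (eu b) (eu c) = 0 := by
    intro p hp a b c
    have h := h4 p hp a b c
    rw [d2_basis1 hU hF hg hp (Hv F a p) (Vv b) (Vv c)] at h
    simpa [Hv1, Hv21, Hv22, Vv_eq, Z_uuu, Pi.single_apply, ite_mul, Finset.sum_ite_eq,
      Finset.sum_ite_eq'] using h
  -- dΩ(Γ,V,∂x)=0
  have H2 : ∀ p ∈ U, ∀ a b, d2 (OmegaG F g) p (GamV F p) (eu a) (ex b) = 0 := by
    intro p hp a b
    have h := h2 p hp a b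
    rw [d2_basis3 hU hF hg hp (GamV F p) (Vv a) (Hv F b p)] at h
    simpa [Hv1, Hv21, Hv22, Vv_eq, H1 p hp, Pi.single_apply, ite_mul, Finset.sum_ite_eq,
      Finset.sum_ite_eq'] using h
  -- dΩ(Γ,∂x,∂x)=0
  have H3 : ∀ p ∈ U, ∀ a b, d2 (OmegaG F g) p (GamV F p) (ex a) (ex b) = 0 := by
    intro p hp a b
    have h := h3 p hp a b
    rw [d2_basis2 hU hF hg hp (GamV F p) (Hv F a p) (Hv F b p)] at h
    have e1 : ∀ x, d2 (OmegaG F g) p (GamV F p) (eu x) (Hv F b p) = 0 := fun x => h2 p hp x b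
    have e2 : d2 (OmegaG F g) p (GamV F p) (ex a) (Hv F b p) = 0 := by
      simpa [Hv1, Hv21, Hv22, Vv_eq, e1, Pi.single_apply, ite_mul, Finset.sum_ite_eq,
        Finset.sum_ite_eq'] using h
    rw [d2_basis3 hU hF hg hp (GamV F p) (ex a) (Hv F b p)] at e2
    have e3 : ∀ x, d2 (OmegaG F g) p (GamV F p) (ex a) (eu x) = 0 := by
      intro x
      have := d2_swap23 (F := F) (g := g) p (GamV F p) (eu x) (ex a)
      rw [H2 p hp x a] at this
      linarith
    simpa [Hv1, Hv21, Hv22, e3, Pi.single_apply, ite_mul, Finset.sum_ite_eq,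
      Finset.sum_ite_eq'] using e2
  -- i_Γ dΩ = 0 : dΩ(Γ,v,w)=0 for all v w
  have hstar : ∀ q ∈ U, ∀ v w, d2 (OmegaG F g) q (GamV F q) v w = 0 := by
    intro p hp v w
    have s_eu : ∀ a b, d2 (OmegaG F g) p (GamV F p) (ex a) (eu b) = 0 := by
      intro a b
      have := d2_swap23 (F := F) (g := g) p (GamV F p) (eu b) (ex a)
      rw [H2 p hp b a] at this; linarith
    have s_te : ∀ b, d2 (OmegaG F g) p (GamV F p) (et n) (ex b) = 0 := by
      intro b
      have hd : d2 (OmegaG F g) p (GamV F p) (GamV F p) (ex b) = 0 := d2_diag12 p _ _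
      rw [d2_basis2 hU hF hg hp (GamV F p) (GamV F p) (ex b)] at hd
      simpa [GamV1, GamV21, GamV22, H3 p hp, H2 p hp] using hd
    have s_tu : ∀ b, d2 (OmegaG F g) p (GamV F p) (et n) (eu b) = 0 := by
      intro b
      have hd : d2 (OmegaG F g) p (GamV F p) (GamV F p) (eu b) = 0 := d2_diag12 p _ _
      rw [d2_basis2 hU hF hg hp (GamV F p) (GamV F p) (eu b)] at hd
      simpa [GamV1, GamV21, GamV22, s_eu, H1 p hp] using hd
    have srow_t : ∀ w, d2 (OmegaG F g) p (GamV F p) (et n) w = 0 := by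
      intro w
      rw [d2_basis3 hU hF hg hp (GamV F p) (et n) w]
      simp [s_te, s_tu, d2_diag23]
    have srow_x : ∀ b w, d2 (OmegaG F g) p (GamV F p) (ex b) w = 0 := by
      intro b w
      rw [d2_basis3 hU hF hg hp (GamV F p) (ex b) w]
      have c1 : d2 (OmegaG F g) p (GamV F p) (ex b) (et n) = 0 := by
        have := d2_swap23 (F := F) (g := g) p (GamV F p) (et n) (ex b)
        rw [s_te b] at this; linarith
      simp [c1, H3 p hp, s_eu]
    have srow_u : ∀ b w, d2 (OmegaG F g) p (GamV F p) (eu b) w = 0 := by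
      intro b w
      rw [d2_basis3 hU hF hg hp (GamV F p) (eu b) w]
      have c1 : d2 (OmegaG F g) p (GamV F p) (eu b) (et n) = 0 := by
        have := d2_swap23 (F := F) (g := g) p (GamV F p) (et n) (eu b)
        rw [s_tu b] at this; linarith
      simp [c1, H2 p hp, H1 p hp]
    rw [d2_basis2 hU hF hg hp (GamV F p) v w]
    simp [srow_t, srow_x, srow_u]
  -- Step A: the symmetry relation for dΩ(∂x,∂x,V)
  have SA : ∀ p ∈ U, ∀ a b c, d2 (OmegaG F g) p (ex b) (ex a) (eu c)
      = d2 (OmegaG F g) p (ex c) (ex a) (eu b) := by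
    intro p hp a b c
    have hI := identI hU hF hg hp (GamV F p) (ex a) (eu b) (eu c)
    have hL : fderiv ℝ (fun q => d2 (OmegaG F g) q (ex a) (eu b) (eu c)) p = 0 :=
      fderiv_vanish hU hp (fun q hq => H4 q hq a b c)
    rw [hL] at hI
    simp only [ContinuousLinearMap.zero_apply] at hI
    have t1 := identII hU hF hg hp hstar (eu b) (eu c) (ex a)
    have t2 := identII hU hF hg hp hstar (ex a) (eu c) (eu b)
    have t3 := identII hU hF hg hp hstar (ex a) (eu b) (eu c)
    have r1 : fderiv ℝ (fun q => d2 (OmegaG F g) q (GamV F p) (eu b) (eu c)) p (ex a) = 0 := by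
      rw [t1]
      simp [exc22, Z_uuu]
    have hswap : ∀ x y z, d2 (OmegaG F g) p (eu x) (ex y) (eu z) = 0 := by
      intro x y z
      have := d2_swap12 (F := F) (g := g) p (ex y) (eu x) (eu z)
      rw [H4 p hp y x z] at this; linarith
    have r2 : fderiv ℝ (fun q => d2 (OmegaG F g) q (GamV F p) (ex a) (eu c)) p (eu b)
        = -d2 (OmegaG F g) p (ex b) (ex a) (eu c) := by
      rw [t2]
      simp [euc22, hswap, Pi.single_apply, ite_mul, Finset.sum_ite_eq, Finset.sum_ite_eq']
    have r3 : fderiv ℝ (fun q => d2 (OmegaG F g) q (GamV F p) (ex a) (eu b)) p (eu c)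
        = -d2 (OmegaG F g) p (ex c) (ex a) (eu b) := by
      rw [t3]
      simp [euc22, hswap, Pi.single_apply, ite_mul, Finset.sum_ite_eq, Finset.sum_ite_eq']
    rw [r1, r2, r3] at hI
    simp at hI
    linarith
  -- dΩ(∂x,∂x,V)=0
  have Zxxu : ∀ p ∈ U, ∀ a b c, d2 (OmegaG F g) p (ex a) (ex b) (eu c) = 0 := by
    intro p hp a b c
    have sym13 : ∀ x y z, d2 (OmegaG F g) p (ex x) (ex y) (eu z)
        = d2 (OmegaG F g) p (ex z) (ex y) (eu x) := fun x y z => SA p hp y x z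
    have sw : ∀ x y z, d2 (OmegaG F g) p (ex x) (ex y) (eu z)
        = -d2 (OmegaG F g) p (ex y) (ex x) (eu z) := by
      intro x y z
      have := d2_swap12 (F := F) (g := g) p (ex y) (ex x) (eu z)
      linarith
    have e1 := sym13 a b c
    have e2 := sw c b a
    have e3 := sym13 b c a
    have e4 := sw a c b
    have e5 := sym13 c a b
    have e6 := sw b a c
    linarith
  -- dΩ(∂x,∂x,∂x)=0
  have Zxxx : ∀ p ∈ U, ∀ a b c, d2 (OmegaG F g) p (ex a) (ex b) (ex c) = 0 := by
    intro p hp a b c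
    have hI := identI hU hF hg hp (GamV F p) (ex b) (ex c) (eu a)
    have hL : fderiv ℝ (fun q => d2 (OmegaG F g) q (ex b) (ex c) (eu a)) p = 0 :=
      fderiv_vanish hU hp (fun q hq => Zxxu q hq b c a)
    rw [hL] at hI
    simp only [ContinuousLinearMap.zero_apply] at hI
    have huxu : ∀ x y z, d2 (OmegaG F g) p (eu x) (ex y) (eu z) = 0 := by
      intro x y z
      have := d2_swap12 (F := F) (g := g) p (ex y) (eu x) (eu z)
      rw [H4 p hp y x z] at this; linarith
    have huxx : ∀ x y z, d2 (OmegaG F g) p (eu x) (ex y) (ex z) = 0 := by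
      intro x y z
      have hs1 := d2_swap12 (F := F) (g := g) p (ex y) (eu x) (ex z)
      have hs2 := d2_swap23 (F := F) (g := g) p (ex y) (ex z) (eu x)
      have := Zxxu p hp y z x
      linarith
    have r1 : fderiv ℝ (fun q => d2 (OmegaG F g) q (GamV F p) (ex c) (eu a)) p (ex b) = 0 := by
      rw [identII hU hF hg hp hstar (ex c) (eu a) (ex b)]
      simp [exc22, huxu]
    have r2 : fderiv ℝ (fun q => d2 (OmegaG F g) q (GamV F p) (ex b) (eu a)) p (ex c) = 0 := by
      rw [identII hU hF hg hp hstar (ex b) (eu a) (ex c)]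
      simp [exc22, huxu]
    have r3 : fderiv ℝ (fun q => d2 (OmegaG F g) q (GamV F p) (ex b) (ex c)) p (eu a)
        = -d2 (OmegaG F g) p (ex a) (ex b) (ex c) := by
      rw [identII hU hF hg hp hstar (ex b) (ex c) (eu a)]
      simp [euc22, huxx, Pi.single_apply, ite_mul, Finset.sum_ite_eq, Finset.sum_ite_eq']
    rw [r1, r2, r3] at hI
    simp at hI
    linarith
  -- the remaining components with et
  have Ztuu : ∀ p ∈ U, ∀ a b, d2 (OmegaG F g) p (et n) (eu a) (eu b) = 0 := by
    intro p hp a b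
    have h := H1 p hp a b
    rw [d2_basis1 hU hF hg hp (GamV F p) (eu a) (eu b)] at h
    simpa [GamV1, GamV21, GamV22, H4 p hp, Z_uuu] using h
  have Ztxu : ∀ p ∈ U, ∀ a b, d2 (OmegaG F g) p (et n) (ex a) (eu b) = 0 := by
    intro p hp a b
    have h := hstar p hp (ex a) (eu b)
    rw [d2_basis1 hU hF hg hp (GamV F p) (ex a) (eu b)] at h
    have huxu : ∀ x y z, d2 (OmegaG F g) p (eu x) (ex y) (eu z) = 0 := by
      intro x y z
      have := d2_swap12 (F := F) (g := g) p (ex y) (eu x) (eu z)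
      rw [H4 p hp y x z] at this; linarith
    simpa [GamV1, GamV21, GamV22, Zxxu p hp, huxu] using h
  have Ztxx : ∀ p ∈ U, ∀ a b, d2 (OmegaG F g) p (et n) (ex a) (ex b) = 0 := by
    intro p hp a b
    have h := hstar p hp (ex a) (ex b)
    rw [d2_basis1 hU hF hg hp (GamV F p) (ex a) (ex b)] at h
    have huxx : ∀ x y z, d2 (OmegaG F g) p (eu x) (ex y) (ex z) = 0 := by
      intro x y z
      have hs1 := d2_swap12 (F := F) (g := g) p (ex y) (eu x) (ex z)
      have hs2 := d2_swap23 (F := F) (g := g) p (ex y) (ex z) (eu x)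
      have := Zxxu p hp y z x
      linarith
    simpa [GamV1, GamV21, GamV22, Zxxx p hp, huxx] using h
  -- all components vanish: dΩ = 0
  have final : ∀ p ∈ U, ∀ v1 v2 v3, d2 (OmegaG F g) p v1 v2 v3 = 0 := by
    intro p hp v1 v2 v3
    have P_tt : ∀ w, d2 (OmegaG F g) p (et n) (et n) w = 0 := fun w => d2_diag12 p _ _
    have P_tx : ∀ a w, d2 (OmegaG F g) p (et n) (ex a) w = 0 := by
      intro a w
      rw [d2_basis3 hU hF hg hp (et n) (ex a) w]
      have c1 : d2 (OmegaG F g) p (et n) (ex a) (et n) = 0 := by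
        have hs := d2_swap23 (F := F) (g := g) p (et n) (et n) (ex a)
        rw [P_tt (ex a)] at hs; linarith
      simp [c1, Ztxx p hp, Ztxu p hp]
    have P_tu : ∀ a w, d2 (OmegaG F g) p (et n) (eu a) w = 0 := by
      intro a w
      rw [d2_basis3 hU hF hg hp (et n) (eu a) w]
      have c1 : d2 (OmegaG F g) p (et n) (eu a) (et n) = 0 := by
        have hs := d2_swap23 (F := F) (g := g) p (et n) (et n) (eu a)
        rw [P_tt (eu a)] at hs; linarith
      have c2 : ∀ c, d2 (OmegaG F g) p (et n) (eu a) (ex c) = 0 := by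
        intro c
        have hs := d2_swap23 (F := F) (g := g) p (et n) (ex c) (eu a)
        rw [Ztxu p hp c a] at hs; linarith
      simp [c1, c2, Ztuu p hp]
    have P_t : ∀ v w, d2 (OmegaG F g) p (et n) v w = 0 := by
      intro v w
      rw [d2_basis2 hU hF hg hp (et n) v w]
      simp [P_tt, P_tx, P_tu]
    have P_xt : ∀ a w, d2 (OmegaG F g) p (ex a) (et n) w = 0 := by
      intro a w
      have hs := d2_swap12 (F := F) (g := g) p (et n) (ex a) w
      rw [P_tx a w] at hs; linarith
    have P_xx : ∀ a b w, d2 (OmegaG F g) p (ex a) (ex b) w = 0 := by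
      intro a b w
      rw [d2_basis3 hU hF hg hp (ex a) (ex b) w]
      have c1 : d2 (OmegaG F g) p (ex a) (ex b) (et n) = 0 := by
        have hs := d2_swap23 (F := F) (g := g) p (ex a) (et n) (ex b)
        rw [P_xt a (ex b)] at hs; linarith
      simp [c1, Zxxx p hp, Zxxu p hp]
    have P_xu : ∀ a b w, d2 (OmegaG F g) p (ex a) (eu b) w = 0 := by
      intro a b w
      rw [d2_basis3 hU hF hg hp (ex a) (eu b) w]
      have c1 : d2 (OmegaG F g) p (ex a) (eu b) (et n) = 0 := by
        have hs := d2_swap23 (F := F) (g := g) p (ex a) (et n) (eu b)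
        rw [P_xt a (eu b)] at hs; linarith
      have c2 : ∀ c, d2 (OmegaG F g) p (ex a) (eu b) (ex c) = 0 := by
        intro c
        have hs := d2_swap23 (F := F) (g := g) p (ex a) (ex c) (eu b)
        rw [Zxxu p hp a c b] at hs; linarith
      simp [c1, c2, H4 p hp]
    have P_x : ∀ a v w, d2 (OmegaG F g) p (ex a) v w = 0 := by
      intro a v w
      rw [d2_basis2 hU hF hg hp (ex a) v w]
      simp [P_xt, P_xx, P_xu]
    have P_ut : ∀ a w, d2 (OmegaG F g) p (eu a) (et n) w = 0 := by
      intro a w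
      have hs := d2_swap12 (F := F) (g := g) p (et n) (eu a) w
      rw [P_tu a w] at hs; linarith
    have P_ux : ∀ a b w, d2 (OmegaG F g) p (eu a) (ex b) w = 0 := by
      intro a b w
      have hs := d2_swap12 (F := F) (g := g) p (ex b) (eu a) w
      rw [P_xu b a w] at hs; linarith
    have P_uu : ∀ a b w, d2 (OmegaG F g) p (eu a) (eu b) w = 0 := by
      intro a b w
      rw [d2_basis3 hU hF hg hp (eu a) (eu b) w]
      have c1 : d2 (OmegaG F g) p (eu a) (eu b) (et n) = 0 := by
        have hs := d2_swap23 (F := F) (g := g) p (eu a) (et n) (eu b)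
        rw [P_ut a (eu b)] at hs; linarith
      have c2 : ∀ c, d2 (OmegaG F g) p (eu a) (eu b) (ex c) = 0 := by
        intro c
        have hs := d2_swap23 (F := F) (g := g) p (eu a) (ex c) (eu b)
        rw [P_ux a c (eu b)] at hs; linarith
      simp [c1, c2, Z_uuu]
    have P_u : ∀ a v w, d2 (OmegaG F g) p (eu a) v w = 0 := by
      intro a v w
      rw [d2_basis2 hU hF hg hp (eu a) v w]
      simp [P_ut, P_ux, P_uu]
    rw [d2_basis1 hU hF hg hp v1 v2 v3]
    simp [P_t, P_x, P_u]
  exact ⟨fun p hp a b c => ⟨final p hp _ _ _, final p hp _ _ _⟩, final⟩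


end IP
end
end

section
/- The Lie bracket of the horizontal vector fields satisfies [H_a, H_b] = R^d_{ab} V_d on U, where R^d_{ab} := (1/2)( ∂²F^d/∂x^a∂u^b − ∂²F^d/∂x^b∂u^a + (1/2)( ∂F^c/∂u^a · ∂²F^d/∂u^c∂u^b − ∂F^c/∂u^b · ∂²F^d/∂u^c∂u^a ) ). -/
/- Setting: the evolution space E = ℝ × ℝ^n × ℝ^n with coordinates (t, x^a, u^a),
   a SODE ẍ^a = F^a(t,x,ẋ), and all the associated geometric objects. -/

noncomputable section

namespace IP

private lemma natCast_le_coe_top (m : ℕ) : (m : WithTop ℕ∞) ≤ ((⊤ : ℕ∞) : WithTop ℕ∞) := by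
  rw [← WithTop.coe_natCast]; exact WithTop.coe_le_coe.2 le_top

/-- [H_a, H_b] = R^d_{ab} V_d. -/
theorem stmt5 {n : ℕ} (U : Set (E n)) (hU : IsOpen U) (F : Fin n → E n → ℝ)
    (hF : ∀ a, ContDiffOn ℝ (⊤ : ℕ∞) (F a) U) :
    ∀ p ∈ U, ∀ a b : Fin n,
      lie (Hv F a) (Hv F b) p = ∑ d, Rcoord F d a b p • Vv d := by
  intro p hp a b
  have hmem : U ∈ nhds p := hU.mem_nhds hp
  have h2 : ∀ c : Fin n, ContDiffAt ℝ (⊤ : ℕ∞) (F c) p :=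
    fun c => (hF c).contDiffAt hmem
  set D2 : Fin n → E n →L[ℝ] E n →L[ℝ] ℝ := fun c => fderiv ℝ (fderiv ℝ (F c)) p with hD2
  have hasD2 : ∀ c, HasFDerivAt (fderiv ℝ (F c)) (D2 c) p := by
    intro c
    have h1 : ContDiffAt ℝ 1 (fderiv ℝ (F c)) p := (h2 c).fderiv_right (natCast_le_coe_top _)
    exact (h1.differentiableAt one_ne_zero).hasFDerivAt
  have hGcd : ∀ c e : Fin n, HasFDerivAt (fun q => fderiv ℝ (F c) q (eu e))
      ((ContinuousLinearMap.apply ℝ ℝ (eu e)).comp (D2 c)) p := fun c e =>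
    ((ContinuousLinearMap.apply ℝ ℝ (eu e : E n)).hasFDerivAt).comp p (hasD2 c)
  have hkey : ∀ d f (v : E n),
      fderiv ℝ (fun q => fderiv ℝ (F d) q (eu f)) p v = (D2 d v) (eu f) := by
    intro d f v
    rw [(hGcd d f).fderiv]; rfl
  have hnegGc : ∀ c e : Fin n, HasFDerivAt (fun q => -(Gc F c e q))
      (((1:ℝ)/2) • ((ContinuousLinearMap.apply ℝ ℝ (eu e)).comp (D2 c))) p := by
    intro c e
    have h := (hGcd c e).const_mul ((1:ℝ)/2)
    have heq : (fun q => -(Gc F c e q)) = fun q => ((1:ℝ)/2) * fderiv ℝ (F c) q (eu e) := by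
      funext q; simp [Gc]
    rw [heq]; exact h
  set L : Fin n → E n →L[ℝ] E n := fun e =>
    (0 : E n →L[ℝ] ℝ).prod ((0 : E n →L[ℝ] (Fin n → ℝ)).prod
      (ContinuousLinearMap.pi fun c =>
        ((1:ℝ)/2) • ((ContinuousLinearMap.apply ℝ ℝ (eu e)).comp (D2 c)))) with hL
  have hHvD : ∀ e, HasFDerivAt (Hv F e) (L e) p := by
    intro e
    exact HasFDerivAt.prodMk (hasFDerivAt_const _ _) (HasFDerivAt.prodMk (hasFDerivAt_const _ _)
      (hasFDerivAt_pi.2 fun c => hnegGc c e))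
  have hHva : ∀ e : Fin n, Hv F e p
      = ex e + ∑ c, (((1:ℝ)/2) * fderiv ℝ (F c) p (eu e)) • (eu c : E n) := by
    intro e
    refine Prod.ext ?_ (Prod.ext ?_ ?_)
    · simp [Hv, ex, eu, Prod.fst_sum]
    · simp [Hv, ex, eu, Prod.snd_sum, Prod.fst_sum]
    · funext d
      simp [Hv, ex, eu, Gc, Prod.snd_sum, Finset.sum_apply, Pi.single_apply,
        Finset.sum_ite_eq']
  have expand : ∀ (d e f : Fin n), (D2 d (Hv F e p)) (eu f) =
      (D2 d (ex e)) (eu f)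
        + ((1:ℝ)/2) * ∑ c, fderiv ℝ (F c) p (eu e) * (D2 d (eu c)) (eu f) := by
    intro d e f
    rw [hHva e, map_add, map_sum, ContinuousLinearMap.add_apply,
      ContinuousLinearMap.sum_apply, Finset.mul_sum]
    congr 1
    refine Finset.sum_congr rfl fun c _ => ?_
    rw [map_smul, ContinuousLinearMap.smul_apply, smul_eq_mul]
    ring
  have hcomp : ∀ (d : Fin n),
      ((1:ℝ)/2) * (D2 d (Hv F a p)) (eu b) - ((1:ℝ)/2) * (D2 d (Hv F b p)) (eu a)
        = Rcoord F d a b p := by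
    intro d
    rw [expand d a b, expand d b a]
    simp only [Rcoord, hkey]
    ring
  have hRHS : (∑ e, Rcoord F e a b p • Vv e)
      = (((0:ℝ), (0 : Fin n → ℝ), fun d => Rcoord F d a b p) : E n) := by
    refine Prod.ext ?_ (Prod.ext ?_ ?_)
    · simp [Vv, eu, Prod.fst_sum]
    · simp [Vv, eu, Prod.fst_sum, Prod.snd_sum]
    · funext c
      simp [Vv, eu, Prod.snd_sum, Finset.sum_apply, Pi.single_apply, mul_ite,
        mul_one, mul_zero, Finset.sum_ite_eq, Finset.sum_ite_eq']
  unfold lie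
  rw [(hHvD a).fderiv, (hHvD b).fderiv, hRHS]
  refine Prod.ext ?_ (Prod.ext ?_ ?_)
  · simp [hL]
  · simp [hL]
  · funext d
    simp only [hL, Prod.snd_sub, Pi.sub_apply, ContinuousLinearMap.prod_apply,
      ContinuousLinearMap.pi_apply, ContinuousLinearMap.smul_apply,
      ContinuousLinearMap.comp_apply, ContinuousLinearMap.apply_apply, smul_eq_mul]
    exact hcomp d

end IP
end
end

section
/- Define recursively Σ¹ := {ω ∈ Σ⁰ : dω ∈ ⟨Σ⁰⟩}, Σ^{i+1} := {ω ∈ Σ^i : dω ∈ ⟨Σ^i⟩}, and Σ̃^{i+1} := {ω ∈ Σ̃^i : dω ∈ ⟨Σ̃^i⟩}. Then the two decreasing sequences interleave: Σ̃¹ ⊇ Σ¹ ⊇ Σ̃² ⊇ Σ² ⊇ … ⊇ Σ̃^p ⊇ Σ^p ⊇ …, i.e. for every p ≥ 1 one has Σ^p ⊆ Σ̃^p and Σ̃^{p+1} ⊆ Σ^p. -/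
/- Setting: the evolution space E = ℝ × ℝ^n × ℝ^n with coordinates (t, x^a, u^a),
   a SODE ẍ^a = F^a(t,x,ẋ), and all the associated geometric objects. -/

noncomputable section

namespace IP


/-! ### Auxiliary lemmas for stmt13 -/

section Stmt13Aux
variable {n : ℕ} {U : Set (E n)} {p : E n} {F : Fin n → E n → ℝ}
  {phc : Fin n → Fin n → E n → ℝ}

/-- auxiliary: the coordinate projection `q ↦ q.2.2 b` as a continuous linear map -/
def Du (b : Fin n) : E n →L[ℝ] ℝ :=
  (ContinuousLinearMap.proj b).comp ((ContinuousLinearMap.snd ℝ (Fin n → ℝ) (Fin n → ℝ)).comp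
    (ContinuousLinearMap.snd ℝ ℝ ((Fin n → ℝ) × (Fin n → ℝ))))

lemma theta_GamV (F : Fin n → E n → ℝ) (p : E n) (b : Fin n) : theta b p (GamV F p) = 0 := by
  simp [theta, GamV]
lemma psi_GamV (F : Fin n → E n → ℝ) (p : E n) (e : Fin n) : psi F e p (GamV F p) = 0 := by
  simp [psi, GamV, theta]
lemma theta_XHf (F : Fin n → E n → ℝ) (X : Fin n → Fin n → E n → ℝ) (p : E n) (c b : Fin n) :
    theta b p (XHf F X c p) = X c b p := by simp [theta, XHf]
lemma psi_XHf (F : Fin n → E n → ℝ) (X : Fin n → Fin n → E n → ℝ) (p : E n) (c e : Fin n) :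
    psi F e p (XHf F X c p) = 0 := by
  simp [psi, XHf, theta, mul_comm]

-- coordinate derivative
lemma Du_apply (b : Fin n) (w : E n) : Du b w = w.2.2 b := rfl
lemma hasFDerivAt_u (b : Fin n) (p : E n) :
    HasFDerivAt (fun q : E n => q.2.2 b) (Du b) p := (Du b).hasFDerivAt

lemma hasFDerivAt_theta (b : Fin n) (v p : E n) :
    HasFDerivAt (fun q : E n => theta b q v) (-(v.1 • Du b)) p := by
  simp only [theta]
  have h := ((hasFDerivAt_u b p).mul_const v.1).const_sub (v.2.1 b)
  exact h

lemma diff_theta (b : Fin n) (v p : E n) :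
    DifferentiableAt ℝ (fun q : E n => theta b q v) p := (hasFDerivAt_theta b v p).differentiableAt

lemma fderiv_theta (b : Fin n) (v p w : E n) :
    fderiv ℝ (fun q : E n => theta b q v) p w = -(w.2.2 b * v.1) := by
  rw [(hasFDerivAt_theta b v p).fderiv]
  simp [Du_apply, mul_comm]
lemma diffAt_of_cd (hU : IsOpen U) (hp : p ∈ U) {f : E n → ℝ}
    (hf : ContDiffOn ℝ (⊤:ℕ∞) f U) : DifferentiableAt ℝ f p :=
  (hf.contDiffAt (hU.mem_nhds hp)).differentiableAt (by simp)

lemma contDiffOn_Gc (hU : IsOpen U) (hF : ∀ a, ContDiffOn ℝ (⊤:ℕ∞) (F a) U) (e b : Fin n) :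
    ContDiffOn ℝ (⊤:ℕ∞) (Gc F e b) U := by
  have h := ((hF e).fderiv_of_isOpen (m := ((⊤:ℕ∞) : WithTop ℕ∞)) hU (by exact_mod_cast (by simp : (⊤:ℕ∞)+1 ≤ ⊤))).clm_apply (contDiffOn_const (c := eu b))
  exact contDiffOn_const.mul h

lemma psi_deriv (hU : IsOpen U) (hp : p ∈ U) (hF : ∀ a, ContDiffOn ℝ (⊤:ℕ∞) (F a) U)
    (e : Fin n) (v w : E n) :
    DifferentiableAt ℝ (fun q : E n => psi F e q v) p ∧
    fderiv ℝ (fun q : E n => psi F e q v) p w =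
      -(fderiv ℝ (F e) p w * v.1) +
        ∑ b, (fderiv ℝ (Gc F e b) p w * theta b p v - Gc F e b p * (w.2.2 b * v.1)) := by
  have hdF : DifferentiableAt ℝ (F e) p := diffAt_of_cd hU hp (hF e)
  have hdG : ∀ b : Fin n, DifferentiableAt ℝ (Gc F e b) p :=
    fun b => diffAt_of_cd hU hp (contDiffOn_Gc hU hF e b)
  have h1 : HasFDerivAt (fun q : E n => v.2.2 e - F e q * v.1)
      (-(v.1 • fderiv ℝ (F e) p)) p :=
    (hdF.hasFDerivAt.mul_const v.1).const_sub (v.2.2 e)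
  have h2 : ∀ b ∈ Finset.univ, HasFDerivAt (fun q : E n => Gc F e b q * theta b q v)
      (Gc F e b p • (-(v.1 • Du b)) + theta b p v • fderiv ℝ (Gc F e b) p) p :=
    fun b _ => (hdG b).hasFDerivAt.mul (hasFDerivAt_theta b v p)
  have h := h1.add (HasFDerivAt.fun_sum h2)
  have h' : HasFDerivAt (fun q : E n => psi F e q v)
      (-(v.1 • fderiv ℝ (F e) p) + ∑ b,
        (Gc F e b p • (-(v.1 • Du b)) + theta b p v • fderiv ℝ (Gc F e b) p)) p := by
    simp only [psi]; exact h
  refine ⟨h'.differentiableAt, ?_⟩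
  rw [h'.fderiv]
  simp only [ContinuousLinearMap.add_apply, ContinuousLinearMap.sum_apply,
    ContinuousLinearMap.smul_apply, ContinuousLinearMap.neg_apply, Du_apply, smul_eq_mul]
  congr 1
  · ring
  · exact Finset.sum_congr rfl fun b _ => by ring
lemma vec_decomp (xv uv : Fin n → ℝ) :
    ((0, xv, uv) : E n) = (∑ b, xv b • ex b) + ∑ b, uv b • eu b := by
  rw [Prod.ext_iff, Prod.ext_iff]
  refine ⟨?_, ?_, ?_⟩
  · simp [ex, eu, Prod.fst_sum, Prod.snd_sum]
  · funext i
    simp [ex, eu, Prod.fst_sum, Prod.snd_sum, Finset.sum_apply, Pi.single_apply,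
      mul_ite, mul_one, mul_zero, Finset.sum_ite_eq]
  · funext i
    simp [ex, eu, Prod.fst_sum, Prod.snd_sum, Finset.sum_apply, Pi.single_apply,
      mul_ite, mul_one, mul_zero, Finset.sum_ite_eq]

lemma fderiv_eu (e b : Fin n) : fderiv ℝ (F e) p (eu b) = -2 * Gc F e b p := by
  simp [Gc]

lemma fderiv_XHf (X : Fin n → Fin n → E n → ℝ) (e c : Fin n) :
    fderiv ℝ (F e) p (XHf F X c p) =
      (∑ b, X c b p * fderiv ℝ (F e) p (ex b)) +
        ∑ b, (-∑ g, X c g p * Gc F b g p) * (-2 * Gc F e b p) := by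
  have : XHf F X c p = (∑ b, X c b p • ex b) + ∑ b, (-∑ g, X c g p * Gc F b g p) • eu b := by
    rw [show XHf F X c p = ((0, fun b => X c b p, fun b => -∑ g, X c g p * Gc F b g p) : E n) from rfl,
      vec_decomp]
  rw [this, map_add, map_sum, map_sum]
  simp [fderiv_eu]

lemma psi_d1 (hU : IsOpen U) (hp : p ∈ U) (hF : ∀ a, ContDiffOn ℝ (⊤:ℕ∞) (F a) U)
    (X : Fin n → Fin n → E n → ℝ) (lam : Fin n → E n → ℝ) (c : Fin n)
    (heig : ∀ e, (∑ b, Phi F e b p * X c b p) = lam c p * X c e p) (e : Fin n) :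
    fderiv ℝ (fun q => psi F e q (XHf F X c p)) p (GamV F p)
      - fderiv ℝ (fun q => psi F e q (GamV F p)) p (XHf F X c p)
      = -(lam c p * X c e p) := by
  have hA := (psi_deriv hU hp hF e (XHf F X c p) (GamV F p)).2
  have hB := (psi_deriv hU hp hF e (GamV F p) (XHf F X c p)).2
  have hXH1 : (XHf F X c p).1 = 0 := rfl
  have hXH2 : ∀ b, (XHf F X c p).2.2 b = -∑ g, X c g p * Gc F b g p := fun b => rfl
  have hG1 : (GamV F p).1 = 1 := rfl
  rw [hA, hB]
  simp only [hXH1, hG1, hXH2, mul_zero, mul_one, zero_mul, neg_zero, sub_zero, zero_add,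
    theta_XHf, theta_GamV, zero_sub]
  rw [fderiv_XHf]
  have hGam : ∀ b : Fin n, fderiv ℝ (Gc F e b) p (GamV F p) = Gam F (Gc F e b) p :=
    fun _ => rfl
  simp only [hGam]
  set W := ∑ b, (∑ g, X c g p * Gc F b g p) * Gc F e b p with hW
  have e3 : ∑ b, (-∑ g, X c g p * Gc F b g p) * (-2 * Gc F e b p) = 2 * W := by
    rw [hW, Finset.mul_sum]
    exact Finset.sum_congr rfl fun b _ => by ring
  have e4 : ∑ x, -(Gc F e x p * -∑ g, X c g p * Gc F x g p) = W := by
    rw [hW]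
    exact Finset.sum_congr rfl fun b _ => by ring
  have swap : W = ∑ b, X c b p * ∑ g, Gc F g b p * Gc F e g p := by
    rw [hW]
    calc ∑ b, (∑ g, X c g p * Gc F b g p) * Gc F e b p
        = ∑ b, ∑ g, X c g p * (Gc F b g p * Gc F e b p) := by
          refine Finset.sum_congr rfl fun b _ => ?_
          rw [Finset.sum_mul]
          exact Finset.sum_congr rfl fun g _ => by ring
      _ = ∑ g, ∑ b, X c g p * (Gc F b g p * Gc F e b p) := Finset.sum_comm
      _ = ∑ b, X c b p * ∑ g, Gc F g b p * Gc F e g p := by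
          exact Finset.sum_congr rfl fun g _ => by rw [Finset.mul_sum]
  have target : -(lam c p * X c e p)
      = ∑ b, (fderiv ℝ (F e) p (ex b) + (∑ g, Gc F g b p * Gc F e g p)
          + Gam F (Gc F e b) p) * X c b p := by
    rw [← heig e, ← Finset.sum_neg_distrib]
    exact Finset.sum_congr rfl fun b _ => by simp only [Phi]; ring
  have rhs : (∑ b, (fderiv ℝ (F e) p (ex b) + (∑ g, Gc F g b p * Gc F e g p)
          + Gam F (Gc F e b) p) * X c b p)
      = (∑ b, X c b p * fderiv ℝ (F e) p (ex b)) + W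
          + ∑ b, Gam F (Gc F e b) p * X c b p := by
    rw [swap]
    calc ∑ b, (fderiv ℝ (F e) p (ex b) + (∑ g, Gc F g b p * Gc F e g p)
          + Gam F (Gc F e b) p) * X c b p
        = ∑ b, (X c b p * fderiv ℝ (F e) p (ex b)
            + (X c b p * ∑ g, Gc F g b p * Gc F e g p + Gam F (Gc F e b) p * X c b p)) := by
          exact Finset.sum_congr rfl fun b _ => by ring
      _ = (∑ b, X c b p * fderiv ℝ (F e) p (ex b))
            + ((∑ b, X c b p * ∑ g, Gc F g b p * Gc F e g p)
            + ∑ b, Gam F (Gc F e b) p * X c b p) := by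
          rw [Finset.sum_add_distrib, Finset.sum_add_distrib]
      _ = (∑ b, X c b p * fderiv ℝ (F e) p (ex b))
            + (∑ b, X c b p * ∑ g, Gc F g b p * Gc F e g p)
            + ∑ b, Gam F (Gc F e b) p * X c b p := by ring
  rw [target, e3, e4, rhs]
  ring
lemma phiV_GamV (a : Fin n) : phiV F phc a p (GamV F p) = 0 := by
  simp [phiV, psi_GamV]

lemma phiV_XHf (X : Fin n → Fin n → E n → ℝ) (a c : Fin n) :
    phiV F phc a p (XHf F X c p) = 0 := by
  simp [phiV, psi_XHf]

lemma phiH_GamV (a : Fin n) : phiH phc a p (GamV F p) = 0 := by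
  simp [phiH, theta_GamV]

lemma phiH_XHf (X : Fin n → Fin n → E n → ℝ) (a c : Fin n) :
    phiH phc a p (XHf F X c p) = ∑ e, phc a e p * X c e p := by
  simp [phiH, theta_XHf]

lemma phiV_deriv (hU : IsOpen U) (hp : p ∈ U) (hF : ∀ a, ContDiffOn ℝ (⊤:ℕ∞) (F a) U)
    (hphc : ∀ a c, ContDiffOn ℝ (⊤:ℕ∞) (phc a c) U) (a : Fin n) (v w : E n) :
    DifferentiableAt ℝ (fun q : E n => phiV F phc a q v) p ∧
    fderiv ℝ (fun q : E n => phiV F phc a q v) p w =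
      ∑ e, (fderiv ℝ (phc a e) p w * psi F e p v
        + phc a e p * fderiv ℝ (fun q => psi F e q v) p w) := by
  have hterm : ∀ e ∈ Finset.univ, HasFDerivAt (fun q : E n => phc a e q * psi F e q v)
      (phc a e p • fderiv ℝ (fun q => psi F e q v) p + psi F e p v • fderiv ℝ (phc a e) p) p :=
    fun e _ => (diffAt_of_cd hU hp (hphc a e)).hasFDerivAt.mul
      (psi_deriv hU hp hF e v w).1.hasFDerivAt
  have h : HasFDerivAt (fun q : E n => phiV F phc a q v)
      (∑ e, (phc a e p • fderiv ℝ (fun q => psi F e q v) p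
        + psi F e p v • fderiv ℝ (phc a e) p)) p := by
    simp only [phiV]; exact HasFDerivAt.fun_sum hterm
  refine ⟨h.differentiableAt, ?_⟩
  rw [h.fderiv]
  simp only [ContinuousLinearMap.sum_apply, ContinuousLinearMap.add_apply,
    ContinuousLinearMap.smul_apply, smul_eq_mul]
  exact Finset.sum_congr rfl fun e _ => by ring

lemma diff_phiH (hU : IsOpen U) (hp : p ∈ U)
    (hphc : ∀ a c, ContDiffOn ℝ (⊤:ℕ∞) (phc a c) U) (a : Fin n) (v : E n) :
    DifferentiableAt ℝ (fun q : E n => phiH phc a q v) p := by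
  have : DifferentiableAt ℝ (fun q : E n => ∑ e, phc a e q * theta e q v) p :=
    DifferentiableAt.fun_sum fun e _ =>
      (diffAt_of_cd hU hp (hphc a e)).mul (diff_theta e v p)
  simpa only [phiH] using this

lemma phiV_d1 (hU : IsOpen U) (hp : p ∈ U) (hF : ∀ a, ContDiffOn ℝ (⊤:ℕ∞) (F a) U)
    (hphc : ∀ a c, ContDiffOn ℝ (⊤:ℕ∞) (phc a c) U)
    (X : Fin n → Fin n → E n → ℝ) (lam : Fin n → E n → ℝ) (c : Fin n)
    (heig : ∀ e, (∑ b, Phi F e b p * X c b p) = lam c p * X c e p) (a : Fin n)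
    (hdual : (∑ e, phc a e p * X c e p) = if a = c then (1:ℝ) else 0) :
    fderiv ℝ (fun q => phiV F phc a q (XHf F X c p)) p (GamV F p)
      - fderiv ℝ (fun q => phiV F phc a q (GamV F p)) p (XHf F X c p)
      = -(lam c p) * (if a = c then (1:ℝ) else 0) := by
  rw [(phiV_deriv hU hp hF hphc a (XHf F X c p) (GamV F p)).2,
    (phiV_deriv hU hp hF hphc a (GamV F p) (XHf F X c p)).2]
  simp only [psi_XHf, psi_GamV, zero_mul, mul_zero, zero_add, add_zero, zero_smul]
  rw [← Finset.sum_sub_distrib]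
  calc ∑ e, (phc a e p * fderiv ℝ (fun q => psi F e q (XHf F X c p)) p (GamV F p)
        - phc a e p * fderiv ℝ (fun q => psi F e q (GamV F p)) p (XHf F X c p))
      = ∑ e, phc a e p * (-(lam c p * X c e p)) := by
        refine Finset.sum_congr rfl fun e _ => ?_
        rw [← mul_sub, psi_d1 hU hp hF X lam c heig e]
    _ = -(lam c p) * ∑ e, phc a e p * X c e p := by
        rw [Finset.mul_sum]
        exact Finset.sum_congr rfl fun e _ => by ring
    _ = -(lam c p) * (if a = c then (1:ℝ) else 0) := by rw [hdual]
lemma fderiv_mul_big (r g1 g2 g3 g4 h1 h2 h3 h4 : E n → ℝ) (w : E n)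
    (hr : DifferentiableAt ℝ r p)
    (hg1 : DifferentiableAt ℝ g1 p) (hg2 : DifferentiableAt ℝ g2 p)
    (hg3 : DifferentiableAt ℝ g3 p) (hg4 : DifferentiableAt ℝ g4 p)
    (hh1 : DifferentiableAt ℝ h1 p) (hh2 : DifferentiableAt ℝ h2 p)
    (hh3 : DifferentiableAt ℝ h3 p) (hh4 : DifferentiableAt ℝ h4 p)
    (z1 : g1 p = 0) (z2 : g2 p = 0) (z3 : g3 p = 0) (z4 : g4 p = 0) :
    fderiv ℝ (fun q => r q * ((1/2 : ℝ) *
        (g1 q * h1 q - g2 q * h2 q + (g3 q * h3 q - g4 q * h4 q)))) p w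
      = r p * ((1/2 : ℝ) * (fderiv ℝ g1 p w * h1 p - fderiv ℝ g2 p w * h2 p
          + (fderiv ℝ g3 p w * h3 p - fderiv ℝ g4 p w * h4 p))) := by
  have H1 := hg1.hasFDerivAt.mul hh1.hasFDerivAt
  have H2 := hg2.hasFDerivAt.mul hh2.hasFDerivAt
  have H3 := hg3.hasFDerivAt.mul hh3.hasFDerivAt
  have H4 := hg4.hasFDerivAt.mul hh4.hasFDerivAt
  have HW := ((H1.sub H2).add (H3.sub H4)).const_mul (1/2 : ℝ)
  have HrW : HasFDerivAt (fun q => r q * ((1/2 : ℝ) *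
      (g1 q * h1 q - g2 q * h2 q + (g3 q * h3 q - g4 q * h4 q)))) _ p := hr.hasFDerivAt.mul HW
  rw [HrW.fderiv]
  simp only [ContinuousLinearMap.add_apply, ContinuousLinearMap.sub_apply,
    ContinuousLinearMap.smul_apply, smul_eq_mul, Pi.mul_apply, Pi.sub_apply, Pi.add_apply, z1, z2, z3, z4]
  ring

lemma omab_term_deriv (hU : IsOpen U) (hp : p ∈ U)
    (hF : ∀ a, ContDiffOn ℝ (⊤:ℕ∞) (F a) U)
    (hphc : ∀ a c, ContDiffOn ℝ (⊤:ℕ∞) (phc a c) U)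
    (r : E n → ℝ) (hr : DifferentiableAt ℝ r p) (a b : Fin n) (v w dir : E n)
    (hv : ∀ x, phiV F phc x p v = 0) (hw : ∀ x, phiV F phc x p w = 0) :
    fderiv ℝ (fun q => r q * omab F phc a b q v w) p dir
      = r p * ((1/2 : ℝ) *
          (fderiv ℝ (fun q => phiV F phc a q v) p dir * phiH phc b p w
          - fderiv ℝ (fun q => phiV F phc a q w) p dir * phiH phc b p v
          + (fderiv ℝ (fun q => phiV F phc b q v) p dir * phiH phc a p w
          - fderiv ℝ (fun q => phiV F phc b q w) p dir * phiH phc a p v))) := by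
  have hVd : ∀ (x : Fin n) (u : E n), DifferentiableAt ℝ (fun q : E n => phiV F phc x q u) p :=
    fun x u => (phiV_deriv hU hp hF hphc x u u).1
  have hHd : ∀ (x : Fin n) (u : E n), DifferentiableAt ℝ (fun q : E n => phiH phc x q u) p :=
    fun x u => diff_phiH hU hp hphc x u
  have := fderiv_mul_big (p := p) r
    (fun q => phiV F phc a q v) (fun q => phiV F phc a q w)
    (fun q => phiV F phc b q v) (fun q => phiV F phc b q w)
    (fun q => phiH phc b q w) (fun q => phiH phc b q v)
    (fun q => phiH phc a q w) (fun q => phiH phc a q v)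
    dir hr (hVd a v) (hVd a w) (hVd b v) (hVd b w)
    (hHd b w) (hHd b v) (hHd a w) (hHd a v) (hv a) (hw a) (hv b) (hw b)
  simpa only [omab, w11] using this

lemma diff_omab_term (hU : IsOpen U) (hp : p ∈ U)
    (hF : ∀ a, ContDiffOn ℝ (⊤:ℕ∞) (F a) U)
    (hphc : ∀ a c, ContDiffOn ℝ (⊤:ℕ∞) (phc a c) U)
    (r : E n → ℝ) (hr : DifferentiableAt ℝ r p) (a b : Fin n) (v w : E n) :
    DifferentiableAt ℝ (fun q => r q * omab F phc a b q v w) p := by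
  have hVd : ∀ (x : Fin n) (u : E n), DifferentiableAt ℝ (fun q : E n => phiV F phc x q u) p :=
    fun x u => (phiV_deriv hU hp hF hphc x u u).1
  have hHd : ∀ (x : Fin n) (u : E n), DifferentiableAt ℝ (fun q : E n => phiH phc x q u) p :=
    fun x u => diff_phiH hU hp hphc x u
  apply hr.mul
  simp only [omab, w11]
  exact (((((hVd a v).mul (hHd b w)).sub ((hVd a w).mul (hHd b v))).add
    ((((hVd b v).mul (hHd a w))).sub ((hVd b w).mul (hHd a v))))).const_mul (1/2 : ℝ)

lemma delta_combine {c d a b : Fin n} (hcd : c < d) (hab : a ≤ b)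
    (rab : Fin n → Fin n → ℝ) (lamc lamd : ℝ) :
    rab a b * ((1/2:ℝ) * ((-lamc * (if a = c then (1:ℝ) else 0)) * (if b = d then (1:ℝ) else 0)
      - (-lamd * (if a = d then (1:ℝ) else 0)) * (if b = c then (1:ℝ) else 0)
      + ((-lamc * (if b = c then (1:ℝ) else 0)) * (if a = d then (1:ℝ) else 0)
        - (-lamd * (if b = d then (1:ℝ) else 0)) * (if a = c then (1:ℝ) else 0))))
    = if a = c ∧ b = d then rab c d * ((1/2:ℝ) * (lamd - lamc)) else 0 := by
  by_cases h1 : a = c <;> by_cases h2 : b = d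
  · rw [h1, h2]
    simp only [if_pos rfl, and_self, if_true, if_neg hcd.ne, if_neg hcd.ne']
    ring
  · have hnot : ¬(a = c ∧ b = d) := fun h => h2 h.2
    rw [if_neg hnot]
    have had : a ≠ d := by rw [h1]; exact hcd.ne
    simp only [if_pos h1, if_neg h2, if_neg had]
    ring
  · have hnot : ¬(a = c ∧ b = d) := fun h => h1 h.1
    rw [if_neg hnot]
    have hbc : b ≠ c := by rw [h2]; exact hcd.ne'
    simp only [if_neg h1, if_pos h2, if_neg hbc]
    ring
  · have hnot : ¬(a = c ∧ b = d) := fun h => h1 h.1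
    rw [if_neg hnot]
    by_cases h3 : a = d <;> by_cases h4 : b = c
    · exfalso
      rw [h3, h4] at hab
      exact absurd hab (not_le.mpr hcd)
    · simp only [if_neg h1, if_neg h2, if_neg h4]
      ring
    · simp only [if_neg h1, if_neg h2, if_neg h3]
      ring
    · simp only [if_neg h1, if_neg h2, if_neg h3, if_neg h4]
      ring

lemma double_sum_delta {c d : Fin n} (K : ℝ) :
    (∑ a : Fin n, ∑ b : Fin n, if a = c ∧ b = d then K else 0) = K := by
  have h : ∀ a : Fin n, (∑ b : Fin n, if a = c ∧ b = d then K else 0)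
      = if a = c then K else 0 := by
    intro a
    by_cases h1 : a = c
    · simp [h1]
    · simp [h1]
  rw [Finset.sum_congr rfl fun a _ => h a]
  simp

lemma d2_formula (hU : IsOpen U) (hp : p ∈ U) (hF : ∀ a, ContDiffOn ℝ (⊤:ℕ∞) (F a) U)
    (hphc : ∀ a c, ContDiffOn ℝ (⊤:ℕ∞) (phc a c) U)
    (X : Fin n → Fin n → E n → ℝ) (lam : Fin n → E n → ℝ)
    (r : Fin n → Fin n → E n → ℝ) (hr : ∀ a b, ContDiffOn ℝ (⊤:ℕ∞) (r a b) U)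
    (heig : ∀ y e : Fin n, (∑ b, Phi F e b p * X y b p) = lam y p * X y e p)
    (hdual : ∀ a b : Fin n, (∑ e, phc a e p * X b e p) = if a = b then (1:ℝ) else 0)
    {c d : Fin n} (hcd : c < d) :
    d2 (fun q v w => ∑ a, ∑ b, if a ≤ b then r a b q * omab F phc a b q v w else 0) p
      (GamV F p) (XHf F X c p) (XHf F X d p)
    = r c d p * ((1/2:ℝ) * (lam d p - lam c p)) := by
  set Γp := GamV F p with hΓp
  set Hc := XHf F X c p with hHc
  set Hd := XHf F X d p with hHd
  have hdiffterm : ∀ (a b : Fin n) (v w : E n),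
      DifferentiableAt ℝ (fun q => if a ≤ b then r a b q * omab F phc a b q v w else 0) p := by
    intro a b v w
    by_cases h : a ≤ b
    · simp only [if_pos h]
      exact diff_omab_term hU hp hF hphc (r a b) (diffAt_of_cd hU hp (hr a b)) a b v w
    · simp only [if_neg h]
      exact differentiableAt_const 0
  have hD : ∀ v w : E n, HasFDerivAt
      (fun q => ∑ a, ∑ b, if a ≤ b then r a b q * omab F phc a b q v w else 0)
      (∑ a, ∑ b, fderiv ℝ (fun q => if a ≤ b then r a b q * omab F phc a b q v w else 0) p) p :=
    fun v w => HasFDerivAt.fun_sum fun a _ => HasFDerivAt.fun_sum fun b _ =>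
      (hdiffterm a b v w).hasFDerivAt
  simp only [d2, (hD Hc Hd).fderiv, (hD Γp Hd).fderiv, (hD Γp Hc).fderiv,
    ContinuousLinearMap.sum_apply]
  have comb : ∀ (f g h : Fin n → Fin n → ℝ),
      ((∑ a, ∑ b, f a b) - (∑ a, ∑ b, g a b) + (∑ a, ∑ b, h a b))
        = ∑ a, ∑ b, (f a b - g a b + h a b) := by
    intro f g h
    rw [← Finset.sum_sub_distrib, ← Finset.sum_add_distrib]
    refine Finset.sum_congr rfl fun a _ => ?_
    rw [← Finset.sum_sub_distrib, ← Finset.sum_add_distrib]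
  rw [comb]
  have hterm : ∀ a b : Fin n,
      (fderiv ℝ (fun q => if a ≤ b then r a b q * omab F phc a b q Hc Hd else 0) p Γp
        - fderiv ℝ (fun q => if a ≤ b then r a b q * omab F phc a b q Γp Hd else 0) p Hc
        + fderiv ℝ (fun q => if a ≤ b then r a b q * omab F phc a b q Γp Hc else 0) p Hd)
      = if a = c ∧ b = d then r c d p * ((1/2:ℝ) * (lam d p - lam c p)) else 0 := by
    intro a b
    by_cases hab : a ≤ b
    · simp only [if_pos hab]
      have hrd : DifferentiableAt ℝ (r a b) p := diffAt_of_cd hU hp (hr a b)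
      rw [omab_term_deriv hU hp hF hphc (r a b) hrd a b Hc Hd Γp
          (fun x => by rw [hHc]; exact phiV_XHf X x c)
          (fun x => by rw [hHd]; exact phiV_XHf X x d),
        omab_term_deriv hU hp hF hphc (r a b) hrd a b Γp Hd Hc
          (fun x => by rw [hΓp]; exact phiV_GamV x)
          (fun x => by rw [hHd]; exact phiV_XHf X x d),
        omab_term_deriv hU hp hF hphc (r a b) hrd a b Γp Hc Hd
          (fun x => by rw [hΓp]; exact phiV_GamV x)
          (fun x => by rw [hHc]; exact phiV_XHf X x c)]
      have hHG : ∀ x : Fin n, phiH phc x p Γp = 0 := fun x => by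
        rw [hΓp]; exact phiH_GamV x
      have hHc' : ∀ x : Fin n, phiH phc x p Hc = if x = c then (1:ℝ) else 0 := fun x => by
        rw [hHc, phiH_XHf, hdual x c]
      have hHd' : ∀ x : Fin n, phiH phc x p Hd = if x = d then (1:ℝ) else 0 := fun x => by
        rw [hHd, phiH_XHf, hdual x d]
      have Rac := phiV_d1 hU hp hF hphc X lam c (heig c) a (hdual a c)
      have Rad := phiV_d1 hU hp hF hphc X lam d (heig d) a (hdual a d)
      have Rbc := phiV_d1 hU hp hF hphc X lam c (heig c) b (hdual b c)
      have Rbd := phiV_d1 hU hp hF hphc X lam d (heig d) b (hdual b d)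
      rw [hΓp] at *
      rw [hHc] at *
      rw [hHd] at *
      calc r a b p * ((1/2:ℝ) *
            (fderiv ℝ (fun q => phiV F phc a q (XHf F X c p)) p (GamV F p)
                * phiH phc b p (XHf F X d p)
              - fderiv ℝ (fun q => phiV F phc a q (XHf F X d p)) p (GamV F p)
                * phiH phc b p (XHf F X c p)
              + (fderiv ℝ (fun q => phiV F phc b q (XHf F X c p)) p (GamV F p)
                  * phiH phc a p (XHf F X d p)
                - fderiv ℝ (fun q => phiV F phc b q (XHf F X d p)) p (GamV F p)
                  * phiH phc a p (XHf F X c p))))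
          - r a b p * ((1/2:ℝ) *
            (fderiv ℝ (fun q => phiV F phc a q (GamV F p)) p (XHf F X c p)
                * phiH phc b p (XHf F X d p)
              - fderiv ℝ (fun q => phiV F phc a q (XHf F X d p)) p (XHf F X c p)
                * phiH phc b p (GamV F p)
              + (fderiv ℝ (fun q => phiV F phc b q (GamV F p)) p (XHf F X c p)
                  * phiH phc a p (XHf F X d p)
                - fderiv ℝ (fun q => phiV F phc b q (XHf F X d p)) p (XHf F X c p)
                  * phiH phc a p (GamV F p))))
          + r a b p * ((1/2:ℝ) *
            (fderiv ℝ (fun q => phiV F phc a q (GamV F p)) p (XHf F X d p)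
                * phiH phc b p (XHf F X c p)
              - fderiv ℝ (fun q => phiV F phc a q (XHf F X c p)) p (XHf F X d p)
                * phiH phc b p (GamV F p)
              + (fderiv ℝ (fun q => phiV F phc b q (GamV F p)) p (XHf F X d p)
                  * phiH phc a p (XHf F X c p)
                - fderiv ℝ (fun q => phiV F phc b q (XHf F X c p)) p (XHf F X d p)
                  * phiH phc a p (GamV F p))))
          = (r a b) p * ((1/2:ℝ)
              * ((-(lam c p) * (if a = c then (1:ℝ) else 0)) * (if b = d then (1:ℝ) else 0)
              - (-(lam d p) * (if a = d then (1:ℝ) else 0)) * (if b = c then (1:ℝ) else 0)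
              + ((-(lam c p) * (if b = c then (1:ℝ) else 0)) * (if a = d then (1:ℝ) else 0)
                - (-(lam d p) * (if b = d then (1:ℝ) else 0))
                  * (if a = c then (1:ℝ) else 0)))) := by
            rw [hHG, hHG, hHc' b, hHc' a, hHd' b, hHd' a]
            linear_combination
              (r a b p * ((1/2:ℝ) * (if b = d then (1:ℝ) else 0))) * Rac
              - (r a b p * ((1/2:ℝ) * (if b = c then (1:ℝ) else 0))) * Rad
              + (r a b p * ((1/2:ℝ) * (if a = d then (1:ℝ) else 0))) * Rbc
              - (r a b p * ((1/2:ℝ) * (if a = c then (1:ℝ) else 0))) * Rbd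
        _ = if a = c ∧ b = d then (fun a b => r a b p) c d * ((1/2:ℝ)
              * (lam d p - lam c p)) else 0 :=
            delta_combine hcd hab (fun a b => r a b p) (lam c p) (lam d p)
        _ = if a = c ∧ b = d then r c d p * ((1/2:ℝ) * (lam d p - lam c p)) else 0 := rfl
    · simp only [if_neg hab, fderiv_fun_const, Pi.zero_apply, ContinuousLinearMap.zero_apply]
      rw [if_neg]
      · ring
      · rintro ⟨rfl, rfl⟩
        exact hab hcd.le
  rw [Finset.sum_congr rfl fun a _ => Finset.sum_congr rfl fun b _ => hterm a b]
  exact double_sum_delta _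


lemma omab_GamV_left (a b : Fin n) (w : E n) : omab F phc a b p (GamV F p) w = 0 := by
  simp [omab, w11, phiV_GamV, phiH_GamV]

lemma omab_XHf_XHf (X : Fin n → Fin n → E n → ℝ) (a b c d : Fin n) :
    omab F phc a b p (XHf F X c p) (XHf F X d p) = 0 := by
  simp [omab, w11, phiV_XHf]

lemma omab_diag (a : Fin n) (v w : E n) :
    omab F phc a a p v w = oma F phc a p v w := by
  simp only [omab, oma]
  ring

lemma Sigma0_val_GamV {ω : E n → E n → E n → ℝ} (hω : ω ∈ Sigma0 F phc U)
    (hp : p ∈ U) (w : E n) : ω p (GamV F p) w = 0 := by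
  obtain ⟨r', _, hrep⟩ := hω
  rw [hrep p hp]
  refine Finset.sum_eq_zero fun a _ => Finset.sum_eq_zero fun b _ => ?_
  by_cases h : a ≤ b <;> simp [h, omab_GamV_left]

lemma Sigma0_val_XHf {ω : E n → E n → E n → ℝ} (hω : ω ∈ Sigma0 F phc U)
    (hp : p ∈ U) (X : Fin n → Fin n → E n → ℝ) (c d : Fin n) :
    ω p (XHf F X c p) (XHf F X d p) = 0 := by
  obtain ⟨r', _, hrep⟩ := hω
  rw [hrep p hp]
  refine Finset.sum_eq_zero fun a _ => Finset.sum_eq_zero fun b _ => ?_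
  by_cases h : a ≤ b <;> simp [h, omab_XHf_XHf]

lemma InIdeal_mono {S S' : Set (E n → E n → E n → ℝ)} (h : S ⊆ S')
    {η : E n → E n → E n → E n → ℝ} : InIdeal U S η → InIdeal U S' η := by
  rintro ⟨m, Ω, α, h1, h2, h3⟩
  exact ⟨m, Ω, α, fun j => h (h1 j), h2, h3⟩

lemma Next_mono {S S' : Set (E n → E n → E n → ℝ)} (h : S ⊆ S') :
    Next U S ⊆ Next U S' := fun ω hω => ⟨h hω.1, InIdeal_mono h hω.2⟩

lemma SigmaT1_subset_Sigma0 : SigmaT1 F phc U ⊆ Sigma0 F phc U := by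
  rintro ω ⟨r, hr, hrep⟩
  refine ⟨fun a b q => if a = b then r a q else 0, ?_, ?_⟩
  · intro a b
    by_cases h : a = b
    · simp only [if_pos h]
      exact hr a
    · simp only [if_neg h]
      exact contDiffOn_const
  · intro q hq v w
    rw [hrep q hq v w]
    refine Finset.sum_congr rfl fun a _ => ?_
    rw [Finset.sum_eq_single a]
    · simp [omab_diag]
    · intro b _ hba
      by_cases h : a ≤ b
      · rw [if_pos h]
        show (if a = b then r a q else 0) * omab F phc a b q v w = 0
        rw [if_neg (fun hh : a = b => hba hh.symm), zero_mul]
      · rw [if_neg h]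
    · intro h
      exact absurd (Finset.mem_univ a) h

lemma key_incl (hU : IsOpen U) {F : Fin n → E n → ℝ} {lam : Fin n → E n → ℝ}
    {X phc : Fin n → Fin n → E n → ℝ} (hE : EigenData F U lam X phc) :
    Next U (Sigma0 F phc U) ⊆ SigmaT1 F phc U := by
  rintro ω ⟨⟨r, hr, hrep⟩, hid⟩
  have hzero : ∀ p ∈ U, ∀ c d : Fin n, c < d → r c d p = 0 := by
    intro p hp c d hcd
    obtain ⟨m, Ω, α, hΩ, hα, hsum⟩ := hid
    have congr3 : ∀ v w : E n, fderiv ℝ (fun q => ω q v w) p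
        = fderiv ℝ (fun q => ∑ a, ∑ b,
            if a ≤ b then r a b q * omab F phc a b q v w else 0) p := fun v w =>
      Filter.EventuallyEq.fderiv_eq
        (Filter.eventuallyEq_of_mem (hU.mem_nhds hp) fun q hq => hrep q hq v w)
    have hL : d2 ω p (GamV F p) (XHf F X c p) (XHf F X d p)
        = r c d p * ((1/2:ℝ) * (lam d p - lam c p)) := by
      have hform := d2_formula (phc := phc) hU hp hE.smooth_F hE.smooth_phc X lam r hr
        (fun y e => hE.eigen p hp y e) (fun a b => hE.dual p hp a b) hcd
      rw [← hform]
      simp only [d2, congr3]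
    have hR : d2 ω p (GamV F p) (XHf F X c p) (XHf F X d p) = 0 := by
      rw [hsum p hp _ _ _]
      refine Finset.sum_eq_zero fun j _ => ?_
      have h1 : Ω j p (GamV F p) (XHf F X d p) = 0 := Sigma0_val_GamV (hΩ j) hp _
      have h2 : Ω j p (GamV F p) (XHf F X c p) = 0 := Sigma0_val_GamV (hΩ j) hp _
      have h3 : Ω j p (XHf F X c p) (XHf F X d p) = 0 := Sigma0_val_XHf (hΩ j) hp X c d
      simp [w12, h1, h2, h3]
    have heq : r c d p * ((1/2:ℝ) * (lam d p - lam c p)) = 0 := by rw [← hL, hR]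
    have hne : ((1/2:ℝ) * (lam d p - lam c p)) ≠ 0 :=
      mul_ne_zero (by norm_num) (sub_ne_zero.mpr (hE.distinct p hp d c hcd.ne'))
    exact (mul_eq_zero.mp heq).resolve_right hne
  refine ⟨fun a => r a a, fun a => hr a a, ?_⟩
  intro p hp v w
  rw [hrep p hp v w]
  refine Finset.sum_congr rfl fun a _ => ?_
  rw [Finset.sum_eq_single a]
  · simp [omab_diag]
  · intro b _ hba
    by_cases h : a ≤ b
    · have hab : a < b := lt_of_le_of_ne h (fun hh => hba hh.symm)
      simp [h, hzero p hp a b hab]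
    · simp [h]
  · intro h
    exact absurd (Finset.mem_univ a) h


end Stmt13Aux

/-- the sequences Σ¹ ⊇ Σ² ⊇ … and Σ̃¹ ⊇ Σ̃² ⊇ … interleave:
Σ̃¹ ⊇ Σ¹ ⊇ Σ̃² ⊇ Σ² ⊇ …, i.e. Σ^p ⊆ Σ̃^p and Σ̃^{p+1} ⊆ Σ^p for all p ≥ 1.
(Here `SigSeq F phc U p` is Σ^p and `SigTSeq F phc U k` is Σ̃^{k+1}.) -/
theorem stmt13 {n : ℕ} (U : Set (E n)) (hU : IsOpen U) (F : Fin n → E n → ℝ)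
    (lam : Fin n → E n → ℝ) (X phc : Fin n → Fin n → E n → ℝ)
    (hE : EigenData F U lam X phc) :
    ∀ k : ℕ,
      SigSeq F phc U (k + 1) ⊆ SigTSeq F phc U k ∧
      SigTSeq F phc U (k + 1) ⊆ SigSeq F phc U (k + 1) := by
  intro k
  induction k with
  | zero =>
      exact ⟨key_incl hU hE, Next_mono SigmaT1_subset_Sigma0⟩
  | succ k ih =>
      exact ⟨Next_mono ih.1, Next_mono ih.2⟩

end IP
end
end

section
/- Consider the SODE in dimension n = 3 given by ẍ = xẏ, ÿ = ẋ, z̈ = 0, i.e. F¹ = x v, F² = u, F³ = 0 in coordinates (t, x, y, z, u, v, w). Let W be any nonempty open subset of {(t,x,y,z,u,v,w) ∈ ℝ⁷ : v > 0, u ≠ 0, x ≠ 0, 4v + x ≠ 0}. Then there is no smooth symmetric matrix-valued function g = (g_{ab}) on W satisfying the four Helmholtz conditions with det g(p) ≠ 0 at some point p ∈ W; that is, this system admits no regular Lagrangian multiplier on W. -/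
/- Setting: the evolution space E = ℝ × ℝ^n × ℝ^n with coordinates (t, x^a, u^a),
   a SODE ẍ^a = F^a(t,x,ẋ), and all the associated geometric objects. -/

noncomputable section

namespace IP


section Stmt17Aux

/-- the specific SODE of statement 17 -/
abbrev Fs : Fin 3 → E 3 → ℝ := ![fun p => p.2.1 0 * p.2.2 1, fun p => p.2.2 0, fun _ => 0]

def cX (i : Fin 3) : E 3 →L[ℝ] ℝ :=
  (ContinuousLinearMap.proj i).comp ((ContinuousLinearMap.fst ℝ (Fin 3 → ℝ) (Fin 3 → ℝ)).comp
    (ContinuousLinearMap.snd ℝ ℝ _))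

def cU (i : Fin 3) : E 3 →L[ℝ] ℝ :=
  (ContinuousLinearMap.proj i).comp ((ContinuousLinearMap.snd ℝ (Fin 3 → ℝ) (Fin 3 → ℝ)).comp
    (ContinuousLinearMap.snd ℝ ℝ _))

@[simp] lemma cX_apply (i : Fin 3) (v : E 3) : cX i v = v.2.1 i := rfl
@[simp] lemma cU_apply (i : Fin 3) (v : E 3) : cU i v = v.2.2 i := rfl

lemma hcX (i : Fin 3) (p : E 3) : HasFDerivAt (fun q : E 3 => q.2.1 i) (cX i) p :=
  (cX i).hasFDerivAt

lemma hcU (i : Fin 3) (p : E 3) : HasFDerivAt (fun q : E 3 => q.2.2 i) (cU i) p :=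
  (cU i).hasFDerivAt

lemma hF0 (p : E 3) : HasFDerivAt (Fs 0) (p.2.1 0 • cU 1 + p.2.2 1 • cX 0) p := by
  have := (hcX 0 p).mul (hcU 1 p)
  exact this

lemma fderivF0 (p v : E 3) :
    fderiv ℝ (fun q : E 3 => q.2.1 0 * q.2.2 1) p v = v.2.1 0 * p.2.2 1 + p.2.1 0 * v.2.2 1 := by
  have h := (hF0 p).fderiv
  simp only [show Fs 0 = fun q : E 3 => q.2.1 0 * q.2.2 1 from rfl] at h
  rw [h]; simp; ring

lemma fderivF1 (p v : E 3) : fderiv ℝ (fun q : E 3 => q.2.2 0) p v = v.2.2 0 := by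
  rw [(hcU 0 p).fderiv]; simp

lemma fderivF2 (p v : E 3) : fderiv ℝ (fun _ : E 3 => (0:ℝ)) p v = 0 := by
  rw [fderiv_fun_const]; simp

lemma Gc_val (a b : Fin 3) (p : E 3) : Gc Fs a b p =
    if a = 0 ∧ b = 1 then -(1/2) * p.2.1 0 else if a = 1 ∧ b = 0 then -(1/2) else 0 := by
  fin_cases a <;> fin_cases b <;>
    simp [Gc, fderivF0, fderivF1, fderivF2, eu, Pi.single_apply]

lemma Gam_Gc (a b : Fin 3) (p : E 3) : Gam Fs (Gc Fs a b) p =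
    if a = 0 ∧ b = 1 then -(1/2) * p.2.2 0 else 0 := by
  by_cases h : a = 0 ∧ b = 1
  · obtain ⟨rfl, rfl⟩ := h
    have he : Gc Fs 0 1 = fun q : E 3 => -(1/2) * q.2.1 0 := by
      ext q; rw [Gc_val]; simp
    rw [Gam, he, (((hcX 0 p)).const_mul (-(1/2) : ℝ)).fderiv]
    simp [GamV]
  · have he : Gc Fs a b = fun _ : E 3 => (if a = 1 ∧ b = 0 then -(1/2) else (0:ℝ)) := by
      ext q; rw [Gc_val]; simp [h]
    rw [Gam, he, fderiv_fun_const]; simp [h]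

lemma Phi_val (a b : Fin 3) (p : E 3) : Phi Fs a b p =
    if a = 0 ∧ b = 0 then -p.2.2 1 - p.2.1 0 / 4
    else if a = 0 ∧ b = 1 then p.2.2 0 / 2
    else if a = 1 ∧ b = 1 then -p.2.1 0 / 4 else 0 := by
  fin_cases a <;> fin_cases b <;>
    simp [Phi, Fin.sum_univ_three, Gc_val, Gam_Gc, fderivF0, fderivF1, fderivF2,
      ex, Pi.single_apply] <;> ring

lemma GamV_x (q : E 3) (i : Fin 3) : (GamV Fs q).2.1 i = q.2.2 i := rfl
lemma GamV_u0 (q : E 3) : (GamV Fs q).2.2 0 = q.2.1 0 * q.2.2 1 := rfl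
lemma GamV_u1 (q : E 3) : (GamV Fs q).2.2 1 = q.2.2 0 := rfl

lemma deriv_vanish_ev {f : E 3 → ℝ} {D : E 3 →L[ℝ] ℝ} {q : E 3}
    (hf : ∀ᶠ r in nhds q, f r = 0) (hd : HasFDerivAt f D q) (v : E 3) : D v = 0 := by
  have hev : f =ᶠ[nhds q] fun _ => (0:ℝ) := hf
  have h2 : HasFDerivAt (fun _ : E 3 => (0:ℝ)) D q := hd.congr_of_eventuallyEq hev.symm
  have h3 : D = 0 := h2.unique (hasFDerivAt_const 0 q)
  simp [h3]

lemma deriv_vanish {W : Set (E 3)} (hWo : IsOpen W) {f : E 3 → ℝ} {D : E 3 →L[ℝ] ℝ} {q : E 3}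
    (hq : q ∈ W) (hf : ∀ r ∈ W, f r = 0) (hd : HasFDerivAt f D q) (v : E 3) : D v = 0 :=
  deriv_vanish_ev (Filter.eventuallyEq_of_mem (hWo.mem_nhds hq) hf) hd v

end Stmt17Aux

/-- the SODE ẍ = xẏ, ÿ = ẋ, z̈ = 0 admits no regular Lagrangian
multiplier on any nonempty open subset of {v > 0, u ≠ 0, x ≠ 0, 4v + x ≠ 0}. -/
theorem stmt17 (W : Set (E 3)) (hWne : W.Nonempty) (hWo : IsOpen W)
    (hWsub : W ⊆ {p : E 3 | 0 < p.2.2 1 ∧ p.2.2 0 ≠ 0 ∧ p.2.1 0 ≠ 0 ∧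
      4 * p.2.2 1 + p.2.1 0 ≠ 0}) :
    ¬ ∃ g : Fin 3 → Fin 3 → E 3 → ℝ,
        (∀ a b, ContDiffOn ℝ (⊤ : ℕ∞) (g a b) W) ∧
        Helmholtz (![fun p => p.2.1 0 * p.2.2 1, fun p => p.2.2 0, fun _ => 0]) W g ∧
        ∃ p ∈ W, (Matrix.of fun a b => g a b p).det ≠ 0 := by
  rintro ⟨g, hg, ⟨hsym, h2, h3, _h4⟩, p, hpW, hdet⟩
  have hdiff : ∀ (a b : Fin 3) (q : E 3), q ∈ W → DifferentiableAt ℝ (g a b) q := fun a b q hq =>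
    ((hg a b).contDiffAt (hWo.mem_nhds hq)).differentiableAt (by simp)
  -- g 2 0 = 0 on W
  have hA20 : ∀ q ∈ W, g 2 0 q = 0 := by
    intro q hq
    obtain ⟨hv, hu, hx, hvx⟩ := hWsub hq
    have h := h3 q hq 0 2
    simp only [Fin.sum_univ_three, Phi_val] at h
    simp at h
    rcases h with h | h
    · exact h
    · exact absurd (by linarith : 4 * q.2.2 1 + q.2.1 0 = 0) hvx
  -- g 2 1 = 0 on W
  have hA21 : ∀ q ∈ W, g 2 1 q = 0 := by
    intro q hq
    obtain ⟨hv, hu, hx, hvx⟩ := hWsub hq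
    have h := h3 q hq 1 2
    simp only [Fin.sum_univ_three, Phi_val] at h
    simp at h
    rw [hA20 q hq] at h
    have h' : g 2 1 q * q.2.1 0 = 0 := by linarith
    exact (mul_eq_zero.mp h').resolve_right hx
  -- R1 : u*A + 2*v*B = 0
  have R1 : ∀ q ∈ W, q.2.2 0 * g 0 0 q + 2 * (q.2.2 1 * g 0 1 q) = 0 := by
    intro q hq
    have h := h3 q hq 0 1
    simp only [Fin.sum_univ_three, Phi_val] at h
    simp at h
    rw [hsym q hq 1 0] at h
    linarith
  -- Gam equations from Helmholtz 2
  have hGam00 : ∀ q ∈ W, fderiv ℝ (g 0 0) q (GamV Fs q) = -(g 0 1 q) := by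
    intro q hq
    have h := h2 q hq 0 0
    simp only [Fin.sum_univ_three, Gc_val, Gam] at h
    simp at h
    linarith
  have hGam01 : ∀ q ∈ W, fderiv ℝ (g 0 1) q (GamV Fs q) =
      -(q.2.1 0 / 2) * g 0 0 q - (1/2) * g 1 1 q := by
    intro q hq
    have h := h2 q hq 0 1
    simp only [Fin.sum_univ_three, Gc_val, Gam] at h
    simp at h
    linarith
  have hGam11 : ∀ q ∈ W, fderiv ℝ (g 1 1) q (GamV Fs q) = -q.2.1 0 * g 0 1 q := by
    intro q hq
    have h := h2 q hq 1 1
    simp only [Fin.sum_univ_three, Gc_val, Gam] at h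
    simp at h
    rw [hsym q hq 1 0] at h
    linarith
  -- R2 : u*B - v*C = 0
  have R2 : ∀ q ∈ W, q.2.2 0 * g 0 1 q - q.2.2 1 * g 1 1 q = 0 := by
    intro q hq
    have hA := (hdiff 0 0 q hq).hasFDerivAt
    have hB := (hdiff 0 1 q hq).hasFDerivAt
    have hz := deriv_vanish hWo hq R1
      (((hcU 0 q).mul hA).add (((hcU 1 q).mul hB).const_mul 2)) (GamV Fs q)
    simp only [ContinuousLinearMap.add_apply, ContinuousLinearMap.smul_apply, cU_apply,
      smul_eq_mul, GamV_u0, GamV_u1] at hz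
    rw [hGam00 q hq, hGam01 q hq] at hz
    linear_combination hz
  -- R3 : 2*x*v*B - u*C = 0
  have R3 : ∀ q ∈ W, 2 * q.2.1 0 * q.2.2 1 * g 0 1 q - q.2.2 0 * g 1 1 q = 0 := by
    intro q hq
    have hB := (hdiff 0 1 q hq).hasFDerivAt
    have hC := (hdiff 1 1 q hq).hasFDerivAt
    have hz := deriv_vanish hWo hq R2
      (((hcU 0 q).mul hB).sub ((hcU 1 q).mul hC)) (GamV Fs q)
    simp only [ContinuousLinearMap.sub_apply, ContinuousLinearMap.add_apply,
      ContinuousLinearMap.smul_apply, cU_apply, smul_eq_mul, GamV_u0, GamV_u1] at hz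
    rw [hGam01 q hq, hGam11 q hq] at hz
    have hr1 := R1 q hq
    linear_combination (2/3) * hz + (q.2.1 0 / 3) * hr1
  -- key : B * (u^2 - 2*x*v^2) = 0
  have hKey : ∀ q ∈ W,
      g 0 1 q * (q.2.2 0 * q.2.2 0 - 2 * (q.2.1 0 * (q.2.2 1 * q.2.2 1))) = 0 := by
    intro q hq
    have hr2 := R2 q hq
    have hr3 := R3 q hq
    linear_combination q.2.2 0 * hr2 - q.2.2 1 * hr3
  -- B p ≠ 0
  have hBp : g 0 1 p ≠ 0 := by
    intro h0
    obtain ⟨hv, hu, hx, hvx⟩ := hWsub hpW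
    have hApz : g 0 0 p = 0 := by
      have hr1 := R1 p hpW
      rw [h0] at hr1
      have h' := mul_eq_zero.mp (by linarith : p.2.2 0 * g 0 0 p = 0)
      exact h'.resolve_left hu
    apply hdet
    apply Matrix.det_eq_zero_of_row_eq_zero 0
    intro j
    fin_cases j
    · exact hApz
    · exact h0
    · exact (hsym p hpW 0 2).trans (hA20 p hpW)
  -- near p, u^2 - 2*x*v^2 = 0
  obtain ⟨hvp, hup, hxp, hvxp⟩ := hWsub hpW
  have hBc : ContinuousAt (g 0 1) p :=
    ((hg 0 1).contDiffAt (hWo.mem_nhds hpW)).continuousAt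
  have hev : ∀ᶠ q in nhds p,
      (fun r : E 3 => r.2.2 0 * r.2.2 0 - 2 * (r.2.1 0 * (r.2.2 1 * r.2.2 1))) q = 0 := by
    filter_upwards [hWo.mem_nhds hpW, hBc.eventually_ne hBp] with q hq hBq
    exact (mul_eq_zero.mp (hKey q hq)).resolve_left hBq
  have hz := deriv_vanish_ev hev
    (((hcU 0 p).mul (hcU 0 p)).sub
      (((hcX 0 p).mul ((hcU 1 p).mul (hcU 1 p))).const_mul 2)) (eu 0)
  simp only [ContinuousLinearMap.sub_apply, ContinuousLinearMap.add_apply,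
    ContinuousLinearMap.smul_apply, cU_apply, cX_apply, smul_eq_mul] at hz
  simp only [eu, Pi.single_apply] at hz
  norm_num at hz
  exact hup hz

end IP
end
end
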